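/- arXiv:2507.23584 — 2 statements merged into one kernel-verified Lean document; each statement's English description precedes it below -/
import Mathlib

section
/- Let γ : I → X be locally of bounded variation. Then for Lebesgue-almost every t ∈ I the metric derivative |γ̇|(t) = lim_{ε→0} d(γ(t+ε),γ(t))/|ε| exists (the limit being taken over ε with t+ε ∈ I). -/
open Filter Topology Set MeasureTheory
open Function
open scoped ENNReal

private lemma leftLim_stieltjes_le {F : ℝ → ℝ} (hF : Monotone F) (t : ℝ) :
    leftLim (hF.stieltjesFunction) t ≤ F t := by
  have h1 : Tendsto hF.stieltjesFunction (𝓝[<] t) (𝓝 (leftLim hF.stieltjesFunction t)) :=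
    hF.stieltjesFunction.mono.tendsto_leftLim t
  refine le_of_tendsto h1 ?_
  filter_upwards [self_mem_nhdsWithin] with u (hu : u < t)
  exact hF.rightLim_le hu

private lemma stieltjes_measure_Icc_ge {F : ℝ → ℝ} (hF : Monotone F) {t s : ℝ} (hts : t ≤ s) :
    F s - F t ≤ (hF.stieltjesFunction.measure (Set.Icc t s)).toReal := by
  have h1 : F s ≤ hF.stieltjesFunction s := hF.le_rightLim le_rfl
  have h2 := leftLim_stieltjes_le hF t
  have h3 : F t ≤ F s := hF hts
  rw [StieltjesFunction.measure_Icc, ENNReal.toReal_ofReal (by linarith)]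
  linarith

private lemma stieltjes_measure_Ioo_le {F : ℝ → ℝ} (hF : Monotone F) {t s : ℝ} :
    hF.stieltjesFunction.measure (Set.Ioo t s) ≤ ENNReal.ofReal (F s - F t) := by
  rw [StieltjesFunction.measure_Ioo]
  apply ENNReal.ofReal_le_ofReal
  have h1 := leftLim_stieltjes_le hF s
  have h2 : F t ≤ hF.stieltjesFunction t := hF.le_rightLim le_rfl
  linarith

private lemma rightLim_add' {F G : ℝ → ℝ} (hF : Monotone F) (hG : Monotone G) (x : ℝ) :
    rightLim (fun u => F u + G u) x = rightLim F x + rightLim G x :=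
  tendsto_nhds_unique ((hF.add hG).tendsto_rightLim x)
    ((hF.tendsto_rightLim x).add (hG.tendsto_rightLim x))

-- growth estimate
--
private lemma monotone_growth_est {F V : ℝ → ℝ} (hF : Monotone F) (hV : Monotone V)
    {M : ℝ → ℝ≥0∞}
    (hcomp : hF.stieltjesFunction.measure.rnDeriv volume ≤ᵐ[volume]
      fun x => hV.stieltjesFunction.measure.rnDeriv volume x + M x)
    (hsing : hF.stieltjesFunction.measure.singularPart volume ≤
      hV.stieltjesFunction.measure.singularPart volume
        + hV.stieltjesFunction.measure.singularPart volume)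
    {t s : ℝ} (hts : t < s)
    (hMfin : volume.withDensity M (Set.Icc t s) ≠ ⊤) :
    F s - F t - (V s - V t) ≤ (volume.withDensity M (Set.Icc t s)).toReal
      + 2 * ((hV.stieltjesFunction.measure.singularPart volume) (Set.Icc t s)).toReal := by
  set μF := hF.stieltjesFunction.measure with hμF
  set μV := hV.stieltjesFunction.measure with hμV
  set ν := μV.singularPart volume with hν
  have hνfin : ν (Set.Icc t s) ≠ ⊤ := by
    refine ne_top_of_le_ne_top (isCompact_Icc.measure_lt_top (μ := μV) (K := Set.Icc t s)).ne ?_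
    exact Measure.le_iff'.1 (Measure.singularPart_le μV volume) _
  have hMfin' : ∫⁻ a in Set.Icc t s, M a ≠ ⊤ := by
    rwa [withDensity_apply _ measurableSet_Icc] at hMfin
  -- Lebesgue decomposition of μF on [t,s]
  have hdec : μF (Set.Icc t s) = μF.singularPart volume (Set.Icc t s)
      + ∫⁻ x in Set.Icc t s, μF.rnDeriv volume x := by
    conv_lhs => rw [(μF.haveLebesgueDecomposition_add volume)]
    rw [Measure.add_apply, withDensity_apply _ measurableSet_Icc]
  -- the absolutely continuous part
  have hrd : ∫⁻ x in Set.Icc t s, μF.rnDeriv volume x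
      ≤ ENNReal.ofReal (V s - V t) + volume.withDensity M (Set.Icc t s) := by
    calc ∫⁻ x in Set.Icc t s, μF.rnDeriv volume x
        ≤ ∫⁻ x in Set.Icc t s, (μV.rnDeriv volume x + M x) :=
          lintegral_mono_ae (ae_restrict_of_ae hcomp)
      _ = (∫⁻ x in Set.Icc t s, μV.rnDeriv volume x) + ∫⁻ x in Set.Icc t s, M x :=
          lintegral_add_left (Measure.measurable_rnDeriv _ _) _
      _ ≤ ENNReal.ofReal (V s - V t) + volume.withDensity M (Set.Icc t s) := by
          gcongr
          · calc ∫⁻ x in Set.Icc t s, μV.rnDeriv volume x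
                = ∫⁻ x in Set.Ioo t s, μV.rnDeriv volume x :=
                  (setLIntegral_congr (Ioo_ae_eq_Icc (μ := volume) (a := t) (b := s))).symm
              _ ≤ μV (Set.Ioo t s) := Measure.setLIntegral_rnDeriv_le _
              _ ≤ ENNReal.ofReal (V s - V t) := stieltjes_measure_Ioo_le hV
          · rw [withDensity_apply _ measurableSet_Icc]
  have hsing' : μF.singularPart volume (Set.Icc t s) ≤ ν (Set.Icc t s) + ν (Set.Icc t s) := by
    have := Measure.le_iff'.1 hsing (Set.Icc t s)
    simpa [Measure.add_apply] using this
  have hbig : μF (Set.Icc t s) ≤ (ν (Set.Icc t s) + ν (Set.Icc t s))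
      + (ENNReal.ofReal (V s - V t) + volume.withDensity M (Set.Icc t s)) := by
    rw [hdec]; exact add_le_add hsing' hrd
  have hFs : F s - F t ≤ (μF (Set.Icc t s)).toReal := stieltjes_measure_Icc_ge hF hts.le
  have hVnn : 0 ≤ V s - V t := by have := hV hts.le; linarith
  have hrhsfin : (ν (Set.Icc t s) + ν (Set.Icc t s))
      + (ENNReal.ofReal (V s - V t) + volume.withDensity M (Set.Icc t s)) ≠ ⊤ := by
    simp [ENNReal.add_ne_top, hνfin, hMfin, hMfin', ENNReal.ofReal_ne_top]
  have h2 : (μF (Set.Icc t s)).toReal ≤ (ν (Set.Icc t s)).toReal + (ν (Set.Icc t s)).toReal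
      + ((V s - V t) + (volume.withDensity M (Set.Icc t s)).toReal) := by
    have := ENNReal.toReal_mono hrhsfin hbig
    rw [ENNReal.toReal_add, ENNReal.toReal_add, ENNReal.toReal_add, ENNReal.toReal_ofReal hVnn]
      at this
    · linarith
    · exact ENNReal.ofReal_ne_top
    · first | exact hMfin | exact hMfin'
    · exact hνfin
    · exact hνfin
    · simp [ENNReal.add_ne_top, hνfin]
    · simp [ENNReal.add_ne_top, hMfin, hMfin', ENNReal.ofReal_ne_top]
  linarith

private theorem metric_deriv_core {X : Type*} [MetricSpace X] (γ : ℝ → X) {a b : ℝ}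
    (hab : a < b) (hfin : eVariationOn γ (Set.Icc a b) ≠ ⊤) :
    ∀ᵐ t, t ∈ Set.Ioo a b → ∃ L, Tendsto (fun s => dist (γ s) (γ t) / |s - t|)
      (𝓝[Set.Icc a b \ {t}] t) (𝓝 L) := by
  set J := Set.Icc a b with hJ
  -- the projection onto J
  set π : ℝ → ℝ := fun u => max a (min b u) with hπ
  have hπJ : ∀ u, π u ∈ J := fun u => ⟨le_max_left _ _, max_le hab.le (min_le_left _ _)⟩
  have hπmono : Monotone π := fun u v huv => max_le_max le_rfl (min_le_min le_rfl huv)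
  have hπid : ∀ u ∈ J, π u = u := by
    intro u hu
    simp only [hπ]
    rw [min_eq_right hu.2, max_eq_right hu.1]
  -- the variation function
  set V : ℝ → ℝ := fun u => (eVariationOn γ (J ∩ Set.Icc a u)).toReal with hV
  have hVfin : ∀ u, eVariationOn γ (J ∩ Set.Icc a u) ≠ ⊤ :=
    fun u => ne_top_of_le_ne_top hfin (eVariationOn.mono γ Set.inter_subset_left)
  have hVmono : Monotone V := fun u v huv => ENNReal.toReal_mono (hVfin v)
    (eVariationOn.mono γ (Set.inter_subset_inter_right _ (Set.Icc_subset_Icc_right huv)))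
  -- key variation inequality
  have hkey : ∀ {u v : ℝ}, u ∈ J → v ∈ J → u ≤ v → dist (γ v) (γ u) ≤ V v - V u := by
    intro u v hu hv huv
    have hfin2 : eVariationOn γ (J ∩ Set.Icc u v) ≠ ⊤ :=
      ne_top_of_le_ne_top hfin (eVariationOn.mono γ Set.inter_subset_left)
    have hsplit := eVariationOn.Icc_add_Icc γ hu.1 huv hu (s := J)
    have hVv : V v = V u + (eVariationOn γ (J ∩ Set.Icc u v)).toReal := by
      simp only [hV, ← hsplit, ENNReal.toReal_add (hVfin u) hfin2]
    have hd : dist (γ v) (γ u) ≤ (eVariationOn γ (J ∩ Set.Icc u v)).toReal := by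
      rw [dist_edist]
      exact ENNReal.toReal_mono hfin2
        (eVariationOn.edist_le γ ⟨hv, huv, le_rfl⟩ ⟨hu, le_rfl, huv⟩)
    linarith
  -- V is constant off J
  have hVπ : ∀ u, V (π u) = V u := by
    intro u
    rcases le_total u a with h | h
    · have h1 : π u = a := by
        simp only [hπ]
        rw [min_eq_right (h.trans hab.le), max_eq_left h]
      rw [h1]
      have e1 : eVariationOn γ (J ∩ Set.Icc a u) = 0 := by
        apply eVariationOn.subsingleton
        intro x hx y hy
        have hx' : x = a := le_antisymm (hx.2.2.trans h) hx.2.1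
        have hy' : y = a := le_antisymm (hy.2.2.trans h) hy.2.1
        rw [hx', hy']
      have e2 : eVariationOn γ (J ∩ Set.Icc a a) = 0 := by
        apply eVariationOn.subsingleton
        intro x hx y hy
        have hx' : x = a := le_antisymm hx.2.2 hx.2.1
        have hy' : y = a := le_antisymm hy.2.2 hy.2.1
        rw [hx', hy']
      simp only [hV, e1, e2]
    · rcases le_total b u with h' | h'
      · have h1 : π u = b := by
          simp only [hπ]
          rw [min_eq_left h', max_eq_right hab.le]
        rw [h1]
        have e1 : J ∩ Set.Icc a u = J := Set.inter_eq_self_of_subset_left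
          (Set.Icc_subset_Icc le_rfl h')
        have e2 : J ∩ Set.Icc a b = J := Set.inter_eq_self_of_subset_left (le_refl J)
        simp only [hV, e1, e2]
      · rw [hπid u ⟨h, h'⟩]
  -- the countable family of distance functions
  set f : ℚ → ℝ → ℝ := fun r u => dist (γ (π u)) (γ (π r)) with hf
  have hfdiff : ∀ (r : ℚ) {u v : ℝ}, u ≤ v → |f r v - f r u| ≤ V v - V u := by
    intro r u v huv
    have h1 : |f r v - f r u| ≤ dist (γ (π v)) (γ (π u)) := abs_dist_sub_le _ _ _
    have h2 := hkey (hπJ u) (hπJ v) (hπmono huv)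
    have h3 := hVπ u
    have h4 := hVπ v
    linarith
  have hg : ∀ r : ℚ, Monotone (fun u => V u + f r u) := by
    intro r u v huv
    have := (abs_le.1 (hfdiff r huv)).1
    dsimp only
    linarith
  have hh : ∀ r : ℚ, Monotone (fun u => V u - f r u) := by
    intro r u v huv
    have := (abs_le.1 (hfdiff r huv)).2
    dsimp only
    linarith
  -- Stieltjes measures
  set μV := hVmono.stieltjesFunction.measure with hμV
  set ν := μV.singularPart volume with hν
  have hsum : ∀ r : ℚ, (hg r).stieltjesFunction.measure + (hh r).stieltjesFunction.measure
      = μV + μV := by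
    intro r
    rw [hμV, ← StieltjesFunction.measure_add, ← StieltjesFunction.measure_add]
    congr 1
    ext x
    simp only [StieltjesFunction.add_apply, Monotone.stieltjesFunction_eq]
    have e : (fun u => (V u + f r u) + (V u - f r u)) = (fun u => V u + V u) := by
      funext u; ring
    calc rightLim (fun u => V u + f r u) x + rightLim (fun u => V u - f r u) x
        = rightLim (fun u => (V u + f r u) + (V u - f r u)) x :=
          (rightLim_add' (hg r) (hh r) x).symm
      _ = rightLim (fun u => V u + V u) x := by rw [e]
      _ = rightLim V x + rightLim V x := rightLim_add' hVmono hVmono x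
  have hsing : ∀ r : ℚ, (hg r).stieltjesFunction.measure.singularPart volume ≤ ν + ν ∧
      (hh r).stieltjesFunction.measure.singularPart volume ≤ ν + ν := by
    intro r
    have h1 : (hg r).stieltjesFunction.measure.singularPart volume
        + (hh r).stieltjesFunction.measure.singularPart volume = ν + ν := by
      rw [hν, ← Measure.singularPart_add, hsum r, Measure.singularPart_add]
    constructor
    · rw [← h1]; exact Measure.le_add_right le_rfl
    · rw [← h1]; exact Measure.le_add_left le_rfl
  -- the derivative candidates
  set w : ℚ → ℝ → ℝ := fun r x => ((hg r).stieltjesFunction.measure.rnDeriv volume x).toReal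
      - (μV.rnDeriv volume x).toReal with hw
  set M : ℝ → ℝ≥0∞ := fun x => ⨆ r : ℚ, ENNReal.ofReal |w r x| with hM
  have hMmeas : Measurable M := by
    apply Measurable.iSup
    intro r
    exact ((Measure.measurable_rnDeriv _ _).ennreal_toReal.sub
      (Measure.measurable_rnDeriv _ _).ennreal_toReal).abs.ennreal_ofReal
  set μm := volume.withDensity M with hμm
  -- a.e. derivative facts
  have aeg : ∀ᵐ x, ∀ r : ℚ, HasDerivAt (fun u => V u + f r u)
      (((hg r).stieltjesFunction.measure.rnDeriv volume x).toReal) x :=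
    ae_all_iff.2 fun r => (hg r).ae_hasDerivAt
  have aeh : ∀ᵐ x, ∀ r : ℚ, HasDerivAt (fun u => V u - f r u)
      (((hh r).stieltjesFunction.measure.rnDeriv volume x).toReal) x :=
    ae_all_iff.2 fun r => (hh r).ae_hasDerivAt
  have aeV : ∀ᵐ x, HasDerivAt V ((μV.rnDeriv volume x).toReal) x := hVmono.ae_hasDerivAt
  have aesum : ∀ᵐ x, ∀ r : ℚ, ((hg r).stieltjesFunction.measure.rnDeriv volume x).toReal
      + ((hh r).stieltjesFunction.measure.rnDeriv volume x).toReal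
      = 2 * (μV.rnDeriv volume x).toReal := by
    filter_upwards [aeg, aeh, aeV] with x h1 h2 h3
    intro r
    have hadd : HasDerivAt (fun u => (V u + f r u) + (V u - f r u))
        (((hg r).stieltjesFunction.measure.rnDeriv volume x).toReal
          + ((hh r).stieltjesFunction.measure.rnDeriv volume x).toReal) x := (h1 r).add (h2 r)
    have e : (fun u => (V u + f r u) + (V u - f r u)) = (fun u => 2 * V u) := by
      funext u; ring
    rw [e] at hadd
    exact hadd.unique (h3.const_mul 2)
  have aebound : ∀ᵐ x, ∀ r : ℚ, |w r x| ≤ (μV.rnDeriv volume x).toReal := by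
    filter_upwards [aesum] with x hx
    intro r
    have h1 := hx r
    have h2 : (0:ℝ) ≤ ((hg r).stieltjesFunction.measure.rnDeriv volume x).toReal :=
      ENNReal.toReal_nonneg
    have h3 : (0:ℝ) ≤ ((hh r).stieltjesFunction.measure.rnDeriv volume x).toReal :=
      ENNReal.toReal_nonneg
    rw [hw, abs_le]
    constructor <;> dsimp only <;> linarith
  have aeMle : ∀ᵐ x, M x ≤ μV.rnDeriv volume x := by
    filter_upwards [aebound, Measure.rnDeriv_lt_top μV volume] with x hx hlt
    simp only [hM]
    apply iSup_le
    intro r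
    calc ENNReal.ofReal |w r x| ≤ ENNReal.ofReal ((μV.rnDeriv volume x).toReal) :=
          ENNReal.ofReal_le_ofReal (hx r)
      _ = μV.rnDeriv volume x := ENNReal.ofReal_toReal hlt.ne
  have hμmle : ∀ u v : ℝ, μm (Set.Icc u v) ≤ μV (Set.Icc u v) := by
    intro u v
    rw [hμm, withDensity_apply _ measurableSet_Icc]
    calc ∫⁻ x in Set.Icc u v, M x ≤ ∫⁻ x in Set.Icc u v, μV.rnDeriv volume x :=
          lintegral_mono_ae (ae_restrict_of_ae aeMle)
      _ ≤ μV (Set.Icc u v) := Measure.setLIntegral_rnDeriv_le _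
  have hμmfin : ∀ u v : ℝ, μm (Set.Icc u v) ≠ ⊤ := fun u v =>
    ne_top_of_le_ne_top (isCompact_Icc.measure_lt_top (μ := μV) (K := Set.Icc u v)).ne
      (hμmle u v)
  -- comparison of Radon-Nikodym derivatives
  have aecomp : ∀ r : ℚ, ((hg r).stieltjesFunction.measure.rnDeriv volume ≤ᵐ[volume]
        fun x => μV.rnDeriv volume x + M x) ∧
      ((hh r).stieltjesFunction.measure.rnDeriv volume ≤ᵐ[volume]
        fun x => μV.rnDeriv volume x + M x) := by
    intro r
    constructor
    · filter_upwards [Measure.rnDeriv_lt_top (hg r).stieltjesFunction.measure volume,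
        Measure.rnDeriv_lt_top μV volume, aebound] with x h1 h2 hb
      calc (hg r).stieltjesFunction.measure.rnDeriv volume x
          = ENNReal.ofReal ((μV.rnDeriv volume x).toReal + w r x) := by
            rw [← ENNReal.ofReal_toReal h1.ne]
            congr 1
            simp only [hw]
            ring
        _ ≤ ENNReal.ofReal ((μV.rnDeriv volume x).toReal) + ENNReal.ofReal (w r x) :=
            ENNReal.ofReal_add_le
        _ ≤ μV.rnDeriv volume x + M x := by
            gcongr
            · rw [ENNReal.ofReal_toReal h2.ne]
            · exact le_trans (ENNReal.ofReal_le_ofReal (le_abs_self _))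
                (le_iSup (fun r' => ENNReal.ofReal |w r' x|) r)
    · filter_upwards [Measure.rnDeriv_lt_top (hh r).stieltjesFunction.measure volume,
        Measure.rnDeriv_lt_top μV volume, aebound, aesum] with x h1 h2 hb hs
      calc (hh r).stieltjesFunction.measure.rnDeriv volume x
          = ENNReal.ofReal ((μV.rnDeriv volume x).toReal + (- w r x)) := by
            rw [← ENNReal.ofReal_toReal h1.ne]
            congr 1
            have := hs r
            simp only [hw]
            linarith
        _ ≤ ENNReal.ofReal ((μV.rnDeriv volume x).toReal) + ENNReal.ofReal (- w r x) :=
            ENNReal.ofReal_add_le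
        _ ≤ μV.rnDeriv volume x + M x := by
            gcongr
            · rw [ENNReal.ofReal_toReal h2.ne]
            · exact le_trans (ENNReal.ofReal_le_ofReal (neg_le_abs _))
                (le_iSup (fun r' => ENNReal.ofReal |w r' x|) r)
  -- the main quantitative estimate
  have main : ∀ (r : ℚ) {t s : ℝ}, t < s →
      |f r s - f r t| ≤ (μm (Set.Icc t s)).toReal + 2 * (ν (Set.Icc t s)).toReal := by
    intro r t s hts
    have h1 := monotone_growth_est (hg r) hVmono (aecomp r).1 (hsing r).1 hts (hμmfin t s)
    have h2 := monotone_growth_est (hh r) hVmono (aecomp r).2 (hsing r).2 hts (hμmfin t s)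
    rw [abs_le]
    have e1 : (fun u => V u + f r u) s - (fun u => V u + f r u) t - (V s - V t)
        = f r s - f r t := by ring
    have e2 : (fun u => V u - f r u) s - (fun u => V u - f r u) t - (V s - V t)
        = -(f r s - f r t) := by ring
    rw [e1] at h1
    rw [e2] at h2
    constructor <;> [linarith [h2]; linarith [h1]]
  -- Vitali family facts
  set vfam := IsUnifLocDoublingMeasure.vitaliFamily (volume : Measure ℝ) 1 with hvfam
  haveI : IsLocallyFiniteMeasure μm := by
    refine ⟨fun x => ⟨Set.Icc (x-1) (x+1), Icc_mem_nhds (by linarith) (by linarith), ?_⟩⟩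
    exact lt_of_le_of_lt (hμmle _ _) (isCompact_Icc.measure_lt_top)
  haveI : IsLocallyFiniteMeasure ν := by
    refine ⟨fun x => ⟨Set.Icc (x-1) (x+1), Icc_mem_nhds (by linarith) (by linarith), ?_⟩⟩
    exact lt_of_le_of_lt (Measure.le_iff'.1 (Measure.singularPart_le μV volume) _)
      (isCompact_Icc.measure_lt_top)
  have aeMrn : μm.rnDeriv volume =ᵐ[volume] M := Measure.rnDeriv_withDensity volume hMmeas
  have aeνrn : ν.rnDeriv volume =ᵐ[volume] 0 :=
    (Measure.mutuallySingular_singularPart μV volume).rnDeriv_ae_eq_zero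
  have aeMlt : ∀ᵐ x, M x < ⊤ := by
    filter_upwards [aeMle, Measure.rnDeriv_lt_top μV volume] with x h1 h2
    exact lt_of_le_of_lt h1 h2
  -- the main pointwise argument
  filter_upwards [aeg, aeV, aeMrn, aeνrn, vfam.ae_tendsto_rnDeriv μm, vfam.ae_tendsto_rnDeriv ν,
    aeMlt, (hVmono.countable_not_continuousAt).ae_notMem volume]
    with t hgdt hVdt hMrn hνrn hvm hvν hMlt hcontm
  intro htIoo
  have htJ : t ∈ J := ⟨htIoo.1.le, htIoo.2.le⟩
  have hπt : π t = t := hπid _ htJ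
  have hVcont : ContinuousAt V t := not_not.1 hcontm
  set L := (M t).toReal with hL
  have hMne : M t ≠ ⊤ := hMlt.ne
  -- the filter is non-trivial
  haveI hlne : (𝓝[J \ {t}] t).NeBot := by
    have h1 : Set.Ioo t b ⊆ J \ {t} := fun x hx =>
      ⟨⟨(htIoo.1.trans hx.1).le, hx.2.le⟩, fun hmem => (ne_of_gt hx.1) hmem⟩
    have h2 : t ∈ closure (Set.Ioo t b) := by
      rw [closure_Ioo htIoo.2.ne]
      exact ⟨le_rfl, htIoo.2.le⟩
    exact mem_closure_iff_nhdsWithin_neBot.1 (closure_mono h1 h2)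
  have hlle : 𝓝[J \ {t}] t ≤ 𝓝[≠] t := nhdsWithin_mono t fun x hx => hx.2
  -- convergence of the averaged measures
  have hm_right : Tendsto (fun y => (μm (Set.Icc t y)).toReal / (y - t)) (𝓝[>] t)
      (𝓝 (M t).toReal) := by
    have h0 : Tendsto (fun A => μm A / volume A) (vfam.filterAt t) (𝓝 (M t)) := by
      rw [← hMrn]; exact hvm
    have h1 := (ENNReal.tendsto_toReal hMne).comp
      (h0.comp (Real.tendsto_Icc_vitaliFamily_right t))
    refine Tendsto.congr' ?_ h1
    filter_upwards [self_mem_nhdsWithin] with y (hy : t < y)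
    simp only [Function.comp_apply]
    rw [Real.volume_Icc, ENNReal.toReal_div, ENNReal.toReal_ofReal (by linarith)]
  have hm_left : Tendsto (fun y => (μm (Set.Icc y t)).toReal / (t - y)) (𝓝[<] t)
      (𝓝 (M t).toReal) := by
    have h0 : Tendsto (fun A => μm A / volume A) (vfam.filterAt t) (𝓝 (M t)) := by
      rw [← hMrn]; exact hvm
    have h1 := (ENNReal.tendsto_toReal hMne).comp
      (h0.comp (Real.tendsto_Icc_vitaliFamily_left t))
    refine Tendsto.congr' ?_ h1
    filter_upwards [self_mem_nhdsWithin] with y (hy : y < t)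
    simp only [Function.comp_apply]
    rw [Real.volume_Icc, ENNReal.toReal_div, ENNReal.toReal_ofReal (by linarith)]
  have hm_tend : Tendsto (fun s => (μm (Set.Icc (min t s) (max t s))).toReal / |s - t|)
      (𝓝[≠] t) (𝓝 (M t).toReal) := by
    rw [← nhdsLT_sup_nhdsGT, tendsto_sup]
    constructor
    · refine Tendsto.congr' ?_ hm_left
      filter_upwards [self_mem_nhdsWithin] with y (hy : y < t)
      rw [min_eq_right hy.le, max_eq_left hy.le, abs_of_neg (by linarith), neg_sub]
    · refine Tendsto.congr' ?_ hm_right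
      filter_upwards [self_mem_nhdsWithin] with y (hy : t < y)
      rw [min_eq_left hy.le, max_eq_right hy.le, abs_of_pos (by linarith)]
  have hν_right : Tendsto (fun y => (ν (Set.Icc t y)).toReal / (y - t)) (𝓝[>] t) (𝓝 0) := by
    have h0 : Tendsto (fun A => ν A / volume A) (vfam.filterAt t) (𝓝 0) := by
      have := hvν; rw [hνrn] at this; simpa using this
    have h1 := (ENNReal.tendsto_toReal (by simp : (0:ℝ≥0∞) ≠ ⊤)).comp
      (h0.comp (Real.tendsto_Icc_vitaliFamily_right t))
    simp only [ENNReal.toReal_zero] at h1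
    refine Tendsto.congr' ?_ h1
    filter_upwards [self_mem_nhdsWithin] with y (hy : t < y)
    simp only [Function.comp_apply]
    rw [Real.volume_Icc, ENNReal.toReal_div, ENNReal.toReal_ofReal (by linarith)]
  have hν_left : Tendsto (fun y => (ν (Set.Icc y t)).toReal / (t - y)) (𝓝[<] t) (𝓝 0) := by
    have h0 : Tendsto (fun A => ν A / volume A) (vfam.filterAt t) (𝓝 0) := by
      have := hvν; rw [hνrn] at this; simpa using this
    have h1 := (ENNReal.tendsto_toReal (by simp : (0:ℝ≥0∞) ≠ ⊤)).comp
      (h0.comp (Real.tendsto_Icc_vitaliFamily_left t))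
    simp only [ENNReal.toReal_zero] at h1
    refine Tendsto.congr' ?_ h1
    filter_upwards [self_mem_nhdsWithin] with y (hy : y < t)
    simp only [Function.comp_apply]
    rw [Real.volume_Icc, ENNReal.toReal_div, ENNReal.toReal_ofReal (by linarith)]
  have hν_tend : Tendsto (fun s => (ν (Set.Icc (min t s) (max t s))).toReal / |s - t|)
      (𝓝[≠] t) (𝓝 0) := by
    rw [← nhdsLT_sup_nhdsGT, tendsto_sup]
    constructor
    · refine Tendsto.congr' ?_ hν_left
      filter_upwards [self_mem_nhdsWithin] with y (hy : y < t)
      rw [min_eq_right hy.le, max_eq_left hy.le, abs_of_neg (by linarith), neg_sub]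
    · refine Tendsto.congr' ?_ hν_right
      filter_upwards [self_mem_nhdsWithin] with y (hy : t < y)
      rw [min_eq_left hy.le, max_eq_right hy.le, abs_of_pos (by linarith)]
  -- the upper-bound function
  set c : ℝ → ℝ := fun s => (μm (Set.Icc (min t s) (max t s))).toReal / |s - t|
      + 2 * ((ν (Set.Icc (min t s) (max t s))).toReal / |s - t|) with hc
  have hctend : Tendsto c (𝓝[J \ {t}] t) (𝓝 L) := by
    have h1 := (hm_tend.mono_left hlle).add ((hν_tend.mono_left hlle).const_mul 2)
    simpa using h1
  -- the eventual upper bound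
  have hFc : ∀ᶠ s in 𝓝[J \ {t}] t, dist (γ s) (γ t) / |s - t| ≤ c s := by
    filter_upwards [self_mem_nhdsWithin] with s hs
    obtain ⟨hsJ, hst'⟩ := hs
    have hst : s ≠ t := hst'
    have habs : 0 < |s - t| := abs_pos.2 (sub_ne_zero.2 hst)
    have hπs : π s = s := hπid _ hsJ
    have hdist : dist (γ s) (γ t) ≤ (μm (Set.Icc (min t s) (max t s))).toReal
        + 2 * (ν (Set.Icc (min t s) (max t s))).toReal := by
      refine le_of_forall_pos_le_add ?_
      intro ε hε
      obtain ⟨δ, hδpos, hδ⟩ := Metric.continuousAt_iff.1 hVcont (ε/2) (by positivity)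
      obtain ⟨r, hr1, hr2⟩ := exists_rat_btwn (lt_min htIoo.2 (lt_add_of_pos_right t hδpos))
      have hrb : (r:ℝ) < b := (lt_min_iff.1 hr2).1
      have hrδ : (r:ℝ) < t + δ := (lt_min_iff.1 hr2).2
      have hrJ : (r:ℝ) ∈ J := ⟨(htIoo.1.trans hr1).le, hrb.le⟩
      have hπr : π (r:ℝ) = r := hπid _ hrJ
      have hclose : dist (γ t) (γ (π (r:ℝ))) < ε/2 := by
        rw [hπr, dist_comm]
        have h1 := hkey htJ hrJ hr1.le
        have h2 : dist ((r:ℝ)) t < δ := by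
          rw [Real.dist_eq, abs_of_pos (by linarith)]; linarith
        have h3 := hδ h2
        rw [Real.dist_eq] at h3
        calc dist (γ (r:ℝ)) (γ t) ≤ V r - V t := h1
          _ ≤ |V r - V t| := le_abs_self _
          _ < ε/2 := h3
      have hfs : f r s = dist (γ s) (γ (π (r:ℝ))) := by simp only [hf]; rw [hπs]
      have hft : f r t = dist (γ t) (γ (π (r:ℝ))) := by simp only [hf]; rw [hπt]
      have htri : dist (γ s) (γ t) - ε ≤ |f r s - f r t| := by
        have h3 : dist (γ s) (γ t) ≤ dist (γ s) (γ (π (r:ℝ))) + dist (γ t) (γ (π (r:ℝ))) :=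
          dist_triangle_right _ _ _
        have h4 : dist (γ s) (γ t) - ε ≤ f r s - f r t := by
          rw [hfs, hft]; linarith
        exact h4.trans (le_abs_self _)
      rcases lt_or_gt_of_ne hst with hlt | hlt
      · have hmain := main r hlt
        rw [abs_sub_comm] at hmain
        rw [min_eq_right hlt.le, max_eq_left hlt.le]
        linarith
      · have hmain := main r hlt
        rw [min_eq_left hlt.le, max_eq_right hlt.le]
        linarith
    calc dist (γ s) (γ t) / |s - t|
        ≤ ((μm (Set.Icc (min t s) (max t s))).toReal
          + 2 * (ν (Set.Icc (min t s) (max t s))).toReal) / |s - t| :=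
          (div_le_div_iff_of_pos_right habs).2 hdist
      _ = c s := by simp only [hc]; ring
  -- boundedness facts
  have hbdd_below : IsBoundedUnder (· ≥ ·) (𝓝[J \ {t}] t)
      (fun s => dist (γ s) (γ t) / |s - t|) :=
    isBoundedUnder_of ⟨0, fun s => div_nonneg dist_nonneg (abs_nonneg _)⟩
  have hbdd_above : IsBoundedUnder (· ≤ ·) (𝓝[J \ {t}] t)
      (fun s => dist (γ s) (γ t) / |s - t|) := by
    obtain ⟨B, hB⟩ := hctend.isBoundedUnder_le
    refine ⟨B, ?_⟩
    rw [eventually_map] at hB ⊢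
    filter_upwards [hFc, hB] with s h1 h2 using h1.trans h2
  -- limsup bound
  have hlimsup : limsup (fun s => dist (γ s) (γ t) / |s - t|) (𝓝[J \ {t}] t) ≤ L := by
    have h1 : limsup (fun s => dist (γ s) (γ t) / |s - t|) (𝓝[J \ {t}] t)
        ≤ limsup c (𝓝[J \ {t}] t) :=
      limsup_le_limsup hFc hbdd_below.isCoboundedUnder_le hctend.isBoundedUnder_le
    rwa [hctend.limsup_eq] at h1
  -- liminf bound
  have hliminf : L ≤ liminf (fun s => dist (γ s) (γ t) / |s - t|) (𝓝[J \ {t}] t) := by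
    have hr : ∀ r : ℚ, |w r t| ≤ liminf (fun s => dist (γ s) (γ t) / |s - t|) (𝓝[J \ {t}] t) := by
      intro r
      have hder : HasDerivAt (f r) (w r t) t := by
        have h1 := (hgdt r).fun_sub hVdt
        simp only [add_sub_cancel_left] at h1
        exact h1
      have hslope0 : Tendsto (slope (f r) t) (𝓝[≠] t) (𝓝 (w r t)) :=
        hasDerivAt_iff_tendsto_slope.1 hder
      have hslope : Tendsto (fun s => |f r s - f r t| / |s - t|) (𝓝[J \ {t}] t) (𝓝 |w r t|) := by
        have h1 := (hslope0.mono_left hlle).abs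
        refine h1.congr fun s => ?_
        rw [slope_def_field, abs_div]
      have hFge : ∀ᶠ s in 𝓝[J \ {t}] t, |f r s - f r t| / |s - t|
          ≤ dist (γ s) (γ t) / |s - t| := by
        filter_upwards [self_mem_nhdsWithin] with s hs
        have hπs : π s = s := hπid _ hs.1
        have h1 : |f r s - f r t| ≤ dist (γ s) (γ t) := by
          simp only [hf]
          rw [hπs, hπt]
          exact abs_dist_sub_le _ _ _
        have habs' : 0 < |s - t| := abs_pos.2 (sub_ne_zero.2 hs.2)
        exact (div_le_div_iff_of_pos_right habs').2 h1
      calc |w r t| = liminf (fun s => |f r s - f r t| / |s - t|) (𝓝[J \ {t}] t) :=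
            hslope.liminf_eq.symm
        _ ≤ liminf (fun s => dist (γ s) (γ t) / |s - t|) (𝓝[J \ {t}] t) :=
            liminf_le_liminf hFge
              (isBoundedUnder_of ⟨0, fun s => div_nonneg (abs_nonneg _) (abs_nonneg _)⟩)
              hbdd_above.isCoboundedUnder_ge
    have hliminf0 : 0 ≤ liminf (fun s => dist (γ s) (γ t) / |s - t|) (𝓝[J \ {t}] t) :=
      le_liminf_of_le hbdd_above.isCoboundedUnder_ge
        (Eventually.of_forall fun s => div_nonneg dist_nonneg (abs_nonneg _))
    have hsup : M t ≤ ENNReal.ofReal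
        (liminf (fun s => dist (γ s) (γ t) / |s - t|) (𝓝[J \ {t}] t)) := by
      simp only [hM]
      exact iSup_le fun r => ENNReal.ofReal_le_ofReal (hr r)
    calc L = (M t).toReal := rfl
      _ ≤ (ENNReal.ofReal (liminf (fun s => dist (γ s) (γ t) / |s - t|)
            (𝓝[J \ {t}] t))).toReal := ENNReal.toReal_mono ENNReal.ofReal_ne_top hsup
      _ = liminf (fun s => dist (γ s) (γ t) / |s - t|) (𝓝[J \ {t}] t) :=
            ENNReal.toReal_ofReal hliminf0
  exact ⟨L, tendsto_of_le_liminf_of_limsup_le hliminf hlimsup hbdd_above hbdd_below⟩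





/-- For `γ : I → X` locally of bounded variation, the metric derivative
`|γ̇|(t) = lim_{ε→0} d(γ(t+ε),γ(t))/|ε|` (limit over points `s = t+ε ∈ I`, `s ≠ t`)
exists for Lebesgue-almost every `t ∈ I`. -/
theorem metric_derivative_exists_ae {X : Type*} [MetricSpace X]
    (I : Set ℝ) (hI : I.OrdConnected) (γ : ℝ → X)
    (hγ : ∀ a ∈ I, ∀ b ∈ I, a ≤ b → eVariationOn γ (Set.Icc a b) < ⊤) :
    ∀ᵐ t ∂(volume.restrict I),
      ∃ L : ℝ, Tendsto (fun s => dist (γ s) (γ t) / |s - t|) (𝓝[I \ {t}] t) (𝓝 L) := by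
  have hIm : MeasurableSet I := hI.measurableSet
  rw [ae_iff, Measure.restrict_apply' hIm]
  set P : ℝ → Prop := fun t =>
    ∃ L : ℝ, Tendsto (fun s => dist (γ s) (γ t) / |s - t|) (𝓝[I \ {t}] t) (𝓝 L) with hP
  have cover : {t | ¬ P t} ∩ I ⊆ ({t | IsLeast I t} ∪ {t | IsGreatest I t}) ∪
      ⋃ (p : ℚ) (q : ℚ), {t | (Set.Icc (p:ℝ) (q:ℝ) ⊆ I) ∧ t ∈ Set.Ioo (p:ℝ) (q:ℝ) ∧ ¬ P t} := by
    rintro t ⟨hnp, htI⟩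
    by_cases hleast : IsLeast I t
    · exact Or.inl (Or.inl hleast)
    by_cases hgr : IsGreatest I t
    · exact Or.inl (Or.inr hgr)
    right
    have h1 : ∃ p₀ ∈ I, p₀ < t := by
      by_contra h
      push_neg at h
      exact hleast ⟨htI, fun y hy => h y hy⟩
    have h2 : ∃ q₀ ∈ I, t < q₀ := by
      by_contra h
      push_neg at h
      exact hgr ⟨htI, fun y hy => h y hy⟩
    obtain ⟨p₀, hp₀I, hp₀⟩ := h1
    obtain ⟨q₀, hq₀I, hq₀⟩ := h2
    obtain ⟨p, hp1, hp2⟩ := exists_rat_btwn hp₀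
    obtain ⟨q, hq1, hq2⟩ := exists_rat_btwn hq₀
    refine Set.mem_iUnion.2 ⟨p, Set.mem_iUnion.2 ⟨q, ?_⟩⟩
    refine ⟨fun x hx => hI.out hp₀I hq₀I ⟨hp1.le.trans hx.1, hx.2.trans hq2.le⟩, ⟨hp2, hq1⟩, hnp⟩
  refine measure_mono_null cover (measure_union_null (measure_union_null ?_ ?_) ?_)
  · exact Set.Subsingleton.measure_zero (fun x hx y hy => hx.unique hy) _
  · exact Set.Subsingleton.measure_zero (fun x hx y hy => hx.unique hy) _
  · refine measure_iUnion_null fun p => measure_iUnion_null fun q => ?_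
    by_cases hpq : Set.Icc (p:ℝ) (q:ℝ) ⊆ I ∧ (p:ℝ) < (q:ℝ)
    · obtain ⟨hsub, hlt⟩ := hpq
      have hfin : eVariationOn γ (Set.Icc (p:ℝ) (q:ℝ)) ≠ ⊤ :=
        (hγ p (hsub ⟨le_rfl, hlt.le⟩) q (hsub ⟨hlt.le, le_rfl⟩) hlt.le).ne
      have hcore := metric_deriv_core γ hlt hfin
      rw [ae_iff] at hcore
      refine measure_mono_null ?_ hcore
      rintro t ⟨hsub', htIoo, hnp⟩
      simp only [Set.mem_setOf_eq, Classical.not_imp]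
      refine ⟨htIoo, fun hQ => hnp ?_⟩
      obtain ⟨L, hL⟩ := hQ
      have hfilt : 𝓝[I \ {t}] t = 𝓝[Set.Icc (p:ℝ) (q:ℝ) \ {t}] t := by
        rw [nhdsWithin_restrict' _ (Ioo_mem_nhds htIoo.1 htIoo.2),
          nhdsWithin_restrict' (Set.Icc (p:ℝ) (q:ℝ) \ {t}) (Ioo_mem_nhds htIoo.1 htIoo.2)]
        congr 1
        ext x
        constructor
        · rintro ⟨⟨hxI, hxt⟩, hxIoo⟩
          exact ⟨⟨Set.Ioo_subset_Icc_self hxIoo, hxt⟩, hxIoo⟩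
        · rintro ⟨⟨hxIcc, hxt⟩, hxIoo⟩
          exact ⟨⟨hsub' hxIcc, hxt⟩, hxIoo⟩
      exact ⟨L, hfilt ▸ hL⟩
    · refine measure_mono_null (fun t ht => ?_) (measure_empty (μ := volume))
      exact absurd ⟨ht.1, lt_trans ht.2.1.1 ht.2.1.2⟩ hpq
end

section
/- Let γ : I → X be locally of bounded variation with speed measure ν, Lebesgue decomposition ν = ν_ac + ν_sing with respect to Lebesgue measure λ, and metric derivative |γ̇| (defined λ-a.e.). Then for every subinterval J ⊆ I one has Var(γ;J) ≤ ∫_J |γ̇| dλ + ν_sing(J), with equality if every point of J not in the relative interior of J is a continuity point of γ. In particular, if γ is continuous, then Var(γ;J) = ∫_J |γ̇| dλ + ν_sing(J) for every subinterval J ⊆ I. -/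
open Filter Topology Set MeasureTheory
set_option maxHeartbeats 1000000
open scoped ENNReal NNReal

/-- `ν` is the speed measure of `γ` on the interval `I`. -/
def IsSpeedMeasure {X : Type*} [MetricSpace X] (γ : ℝ → X) (I : Set ℝ)
    (ν : Measure ℝ) : Prop :=
  ν Iᶜ = 0 ∧
  ∀ J : Set ℝ, J ⊆ I → J.OrdConnected → (∃ U : Set ℝ, IsOpen U ∧ J = U ∩ I) →
    ν J = eVariationOn γ J

section Helpers

/-- A countable set misses a point in every nonempty open interval. -/
lemma exists_mem_Ioo_not_mem {C : Set ℝ} (hC : C.Countable) {α β : ℝ} (h : α < β) :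
    ∃ x, x ∈ Ioo α β ∧ x ∉ C := by
  by_contra hcon
  push_neg at hcon
  have hsub : Ioo α β ⊆ C := fun x hx => hcon x hx
  have h1 : (volume : Measure ℝ) (Ioo α β) = 0 :=
    measure_mono_null hsub (hC.measure_zero _)
  rw [Real.volume_Ioo] at h1
  simp only [ENNReal.ofReal_eq_zero] at h1
  linarith

/-- Shrinking closed intervals: measure continuity from above. -/
lemma tendsto_measure_Icc_shrink (μ : Measure ℝ) {s t : ℝ} (hst : s ≤ t) {κ : ℝ} (hκ : 0 < κ)
    (hfin : ∃ n : ℕ, μ (Icc (s - κ/(n+1)) (t + κ/(n+1))) ≠ ⊤) :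
    Tendsto (fun n : ℕ => μ (Icc (s - κ/(n+1)) (t + κ/(n+1)))) atTop (𝓝 (μ (Icc s t))) := by
  have hiInter : ⋂ n : ℕ, Icc (s - κ/(n+1)) (t + κ/(n+1)) = Icc s t := by
    ext x
    simp only [mem_iInter, mem_Icc]
    constructor
    · intro hx
      constructor
      · by_contra hcon
        push_neg at hcon
        obtain ⟨n, hn⟩ := exists_nat_one_div_lt (show (0:ℝ) < (s - x)/κ from div_pos (by linarith) hκ)
        have := (hx n).1
        rw [div_lt_div_iff₀ (by positivity) hκ] at hn
        have h2 : κ/(n+1) < s - x := by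
          rw [div_lt_iff₀ (by positivity : (0:ℝ) < (n:ℝ)+1)]
          linarith
        linarith
      · by_contra hcon
        push_neg at hcon
        obtain ⟨n, hn⟩ := exists_nat_one_div_lt (show (0:ℝ) < (x - t)/κ from div_pos (by linarith) hκ)
        have := (hx n).2
        rw [div_lt_div_iff₀ (by positivity) hκ] at hn
        have h2 : κ/(n+1) < x - t := by
          rw [div_lt_iff₀ (by positivity : (0:ℝ) < (n:ℝ)+1)]
          linarith
        linarith
    · intro hx n
      have h1 : (0:ℝ) < κ/(n+1) := by positivity
      constructor <;> [linarith [hx.1]; linarith [hx.2]]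
  have hanti : Antitone fun n : ℕ => Icc (s - κ/(n+1)) (t + κ/(n+1)) := by
    intro n m hnm
    have h1 : (κ:ℝ)/(m+1) ≤ κ/(n+1) := by
      apply div_le_div_of_nonneg_left hκ.le (by positivity)
      exact_mod_cast by omega
    exact Icc_subset_Icc (by linarith) (by linarith)
  have := tendsto_measure_iInter_atTop (μ := μ)
    (fun n => measurableSet_Icc.nullMeasurableSet) hanti hfin
  rwa [hiInter] at this

/-- Shrinking `Ioc` from the left: measure continuity from above. -/
lemma tendsto_measure_Ioc_shrink (μ : Measure ℝ) {s t : ℝ} (hst : s ≤ t)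
    (hfin : ∃ n : ℕ, μ (Ioc (s - 1/(n+1)) t) ≠ ⊤) :
    Tendsto (fun n : ℕ => μ (Ioc (s - 1/(n+1)) t)) atTop (𝓝 (μ (Icc s t))) := by
  have hiInter : ⋂ n : ℕ, Ioc (s - 1/(n+1)) t = Icc s t := by
    ext x
    simp only [mem_iInter, mem_Ioc, mem_Icc]
    constructor
    · intro hx
      refine ⟨?_, (hx 0).2⟩
      by_contra hcon
      push_neg at hcon
      obtain ⟨n, hn⟩ := exists_nat_one_div_lt (show (0:ℝ) < s - x by linarith)
      have := (hx n).1
      linarith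
    · intro hx n
      have h1 : (0:ℝ) < 1/(n+1) := by positivity
      exact ⟨by linarith [hx.1], hx.2⟩
  have hanti : Antitone fun n : ℕ => Ioc (s - 1/(n+1)) t := by
    intro n m hnm
    have h1 : (1:ℝ)/(m+1) ≤ 1/(n+1) := by
      apply one_div_le_one_div_of_le (by positivity)
      exact_mod_cast by omega
    exact Ioc_subset_Ioc (by linarith) le_rfl
  have := tendsto_measure_iInter_atTop (μ := μ)
    (fun n => measurableSet_Ioc.nullMeasurableSet) hanti hfin
  rwa [hiInter] at this

end Helpers
section SpeedBasics

variable {X : Type*} [MetricSpace X] {I : Set ℝ} {γ : ℝ → X} {ν : Measure ℝ}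

lemma nu_relopen (hI : I.OrdConnected) (hν : IsSpeedMeasure γ I ν) (s t : ℝ) :
    ν (Ioo s t ∩ I) = eVariationOn γ (Ioo s t ∩ I) :=
  hν.2 _ inter_subset_right (Set.ordConnected_Ioo.inter hI) ⟨Ioo s t, isOpen_Ioo, rfl⟩

/-- Elements of `I` slightly beyond `[u,v]` are trapped in an interval with endpoints in `I`. -/
lemma bound_pair (hI : I.OrdConnected) {u v : ℝ} (hu : u ∈ I) (hv : v ∈ I) (huv : u ≤ v) :
    ∃ c ∈ I, ∃ d ∈ I, ∃ ε : ℝ, 0 < ε ∧ c ≤ u ∧ v ≤ d ∧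
      ∀ ⦃x⦄, x ∈ I → u - ε < x → x < v + ε → x ∈ Icc c d := by
  have hleft : ∃ c ∈ I, ∃ ε : ℝ, 0 < ε ∧ c ≤ u ∧ ∀ ⦃x⦄, x ∈ I → u - ε < x → c ≤ x := by
    by_cases hc : ∃ c ∈ I, c < u
    · obtain ⟨c, hcI, hcu⟩ := hc
      exact ⟨c, hcI, u - c, by linarith, hcu.le, fun x _ hx => by linarith⟩
    · push_neg at hc
      exact ⟨u, hu, 1, one_pos, le_rfl, fun x hx _ => hc x hx⟩
  have hright : ∃ d ∈ I, ∃ ε : ℝ, 0 < ε ∧ v ≤ d ∧ ∀ ⦃x⦄, x ∈ I → x < v + ε → x ≤ d := by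
    by_cases hd : ∃ d ∈ I, v < d
    · obtain ⟨d, hdI, hvd⟩ := hd
      exact ⟨d, hdI, d - v, by linarith, hvd.le, fun x _ hx => by linarith⟩
    · push_neg at hd
      exact ⟨v, hv, 1, one_pos, le_rfl, fun x hx _ => hd x hx⟩
  obtain ⟨c, hcI, ε₁, hε₁, hcu, h₁⟩ := hleft
  obtain ⟨d, hdI, ε₂, hε₂, hvd, h₂⟩ := hright
  refine ⟨c, hcI, d, hdI, min ε₁ ε₂, lt_min hε₁ hε₂, hcu, hvd, fun x hx h1 h2 => ?_⟩
  exact ⟨h₁ hx (by have := min_le_left ε₁ ε₂; linarith),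
    h₂ hx (by have := min_le_right ε₁ ε₂; linarith)⟩

lemma nu_Ioo_lt_top (hI : I.OrdConnected)
    (hγ : ∀ a ∈ I, ∀ b ∈ I, a ≤ b → eVariationOn γ (Set.Icc a b) < ⊤)
    (hν : IsSpeedMeasure γ I ν) {u v : ℝ} (hu : u ∈ I) (hv : v ∈ I) (huv : u ≤ v) :
    ∃ ε : ℝ, 0 < ε ∧ ∀ s t, u - ε ≤ s → t ≤ v + ε → ν (Ioo s t ∩ I) < ⊤ := by
  obtain ⟨c, hcI, d, hdI, ε, hε, hcu, hvd, hsub⟩ := bound_pair hI hu hv huv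
  refine ⟨ε/2, by linarith, fun s t hs ht => ?_⟩
  rw [nu_relopen hI hν]
  refine lt_of_le_of_lt (eVariationOn.mono γ ?_) (hγ c hcI d hdI (by linarith))
  intro x hx
  exact hsub hx.2 (by have := hx.1.1; linarith) (by have := hx.1.2; linarith)

lemma nu_Icc_lt_top (hI : I.OrdConnected)
    (hγ : ∀ a ∈ I, ∀ b ∈ I, a ≤ b → eVariationOn γ (Set.Icc a b) < ⊤)
    (hν : IsSpeedMeasure γ I ν) {u v : ℝ} (hu : u ∈ I) (hv : v ∈ I) (huv : u ≤ v) :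
    ν (Icc u v) < ⊤ := by
  obtain ⟨ε, hε, h⟩ := nu_Ioo_lt_top hI hγ hν hu hv huv
  refine lt_of_le_of_lt (measure_mono ?_) (h (u - ε/2) (v + ε/2) (by linarith) (by linarith))
  intro x hx
  exact ⟨⟨by have := hx.1; linarith, by have := hx.2; linarith⟩, hI.out hu hv hx⟩

lemma tendsto_nu_Icc (hI : I.OrdConnected)
    (hγ : ∀ a ∈ I, ∀ b ∈ I, a ≤ b → eVariationOn γ (Set.Icc a b) < ⊤)
    (hν : IsSpeedMeasure γ I ν) {u v : ℝ} (hu : u ∈ I) (hv : v ∈ I) (huv : u ≤ v) :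
    Tendsto (fun n : ℕ => ν (Ioo (u - 1/(n+1)) (v + 1/(n+1)) ∩ I)) atTop (𝓝 (ν (Icc u v))) := by
  obtain ⟨ε, hε, hfin⟩ := nu_Ioo_lt_top hI hγ hν hu hv huv
  have hiInter : ⋂ n : ℕ, (Ioo (u - 1/(n+1)) (v + 1/(n+1)) ∩ I) = Icc u v := by
    ext x
    simp only [mem_iInter, mem_inter_iff, mem_Ioo, mem_Icc]
    constructor
    · intro hx
      constructor
      · by_contra hcon
        push_neg at hcon
        obtain ⟨n, hn⟩ := exists_nat_one_div_lt (show (0:ℝ) < u - x by linarith)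
        have := (hx n).1.1
        linarith
      · by_contra hcon
        push_neg at hcon
        obtain ⟨n, hn⟩ := exists_nat_one_div_lt (show (0:ℝ) < x - v by linarith)
        have := (hx n).1.2
        linarith
    · intro hx n
      have h1 : (0:ℝ) < 1/(n+1) := by positivity
      exact ⟨⟨by linarith [hx.1], by linarith [hx.2]⟩, hI.out hu hv ⟨hx.1, hx.2⟩⟩
  have hanti : Antitone fun n : ℕ => Ioo (u - 1/(n+1)) (v + 1/(n+1)) ∩ I := by
    intro n m hnm
    have h1 : (1:ℝ)/(m+1) ≤ 1/(n+1) := by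
      apply one_div_le_one_div_of_le (by positivity)
      exact_mod_cast by omega
    exact inter_subset_inter_left _ (Ioo_subset_Ioo (by linarith) (by linarith))
  have hmeas : ∀ n : ℕ, NullMeasurableSet (Ioo (u - 1/(n+1)) (v + 1/(n+1)) ∩ I) ν :=
    fun n => (measurableSet_Ioo.inter hI.measurableSet).nullMeasurableSet
  have hf : ∃ n : ℕ, ν (Ioo (u - 1/(n+1)) (v + 1/(n+1)) ∩ I) ≠ ⊤ := by
    obtain ⟨n, hn⟩ := exists_nat_one_div_lt hε
    exact ⟨n, (hfin _ _ (by linarith) (by linarith)).ne⟩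
  have := tendsto_measure_iInter_atTop hmeas hanti hf
  rwa [hiInter] at this

lemma var_Icc_le_nu (hI : I.OrdConnected)
    (hγ : ∀ a ∈ I, ∀ b ∈ I, a ≤ b → eVariationOn γ (Set.Icc a b) < ⊤)
    (hν : IsSpeedMeasure γ I ν) {u v : ℝ} (hu : u ∈ I) (hv : v ∈ I) (huv : u ≤ v) :
    eVariationOn γ (Icc u v) ≤ ν (Icc u v) := by
  refine ge_of_tendsto (tendsto_nu_Icc hI hγ hν hu hv huv) (Eventually.of_forall fun n => ?_)
  rw [nu_relopen hI hν]
  refine eVariationOn.mono γ fun x hx => ?_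
  have h1 : (0:ℝ) < 1/(n+1) := by positivity
  exact ⟨⟨by have := hx.1; linarith, by have := hx.2; linarith⟩, hI.out hu hv hx⟩

lemma var_le_nu (hI : I.OrdConnected)
    (hγ : ∀ a ∈ I, ∀ b ∈ I, a ≤ b → eVariationOn γ (Set.Icc a b) < ⊤)
    (hν : IsSpeedMeasure γ I ν) {J : Set ℝ} (hJI : J ⊆ I) (hJ : J.OrdConnected) :
    eVariationOn γ J ≤ ν J := by
  rw [eVariationOn]
  refine iSup_le ?_
  rintro ⟨n, u, hu, us⟩
  set w : ℕ → ℝ := fun i => u (min i n) with hw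
  have hwmono : Monotone w := fun i j hij => hu (min_le_min hij le_rfl)
  have hwmem : ∀ i, w i ∈ Icc (u 0) (u n) :=
    fun i => ⟨hu (Nat.zero_le _), hu (min_le_right i n)⟩
  have hsum : (∑ i ∈ Finset.range n, edist (γ (u (i + 1))) (γ (u i)))
      = ∑ i ∈ Finset.range n, edist (γ (w (i + 1))) (γ (w i)) := by
    refine Finset.sum_congr rfl fun i hi => ?_
    have hi' := Finset.mem_range.1 hi
    have h1 : min (i+1) n = i+1 := min_eq_left (by omega)
    have h2 : min i n = i := min_eq_left (by omega)
    rw [hw]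
    simp only [h1, h2]
  calc (∑ i ∈ Finset.range n, edist (γ (u (i + 1))) (γ (u i)))
      ≤ eVariationOn γ (Icc (u 0) (u n)) := by
        rw [hsum]; exact eVariationOn.sum_le (f := γ) (n := n) hwmono hwmem
    _ ≤ ν (Icc (u 0) (u n)) :=
        var_Icc_le_nu hI hγ hν (hJI (us 0)) (hJI (us n)) (hu (Nat.zero_le n))
    _ ≤ ν J := measure_mono (hJ.out (us 0) (us n))

end SpeedBasics
section KeyClaim

variable {Y : Type*} [MetricSpace Y]

/-- Near the right endpoint, the remaining variation is controlled by one distance plus `ε`. -/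
lemma key_left (f : ℝ → Y) {u t : ℝ} (hut : u < t)
    (hfin : eVariationOn f (Icc u t) ≠ ⊤) {ε : ℝ≥0∞} (hε : 0 < ε) :
    ∃ s, u ≤ s ∧ s < t ∧ ∀ r, s < r → r < t →
      eVariationOn f (Icc u t) ≤ eVariationOn f (Icc u r) + edist (f t) (f r) + ε := by
  set T := eVariationOn f (Icc u t) with hT
  by_cases hTε : T ≤ ε
  · exact ⟨u, le_rfl, hut, fun r _ _ => le_trans hTε (le_add_self)⟩
  push_neg at hTε
  have hT0 : T ≠ 0 := fun h => by simp [h] at hTε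
  have hsub : T - ε < T := ENNReal.sub_lt_self hfin hT0 hε.ne'
  rw [hT, eVariationOn] at hsub
  rw [lt_iSup_iff] at hsub
  obtain ⟨⟨n, w, hw, hwmem⟩, hsum⟩ := hsub
  set F := (Finset.range (n+1)).filter (fun i => w i < t) with hF
  by_cases hFne : F.Nonempty
  · set k := F.max' hFne with hk
    have hkF : k ∈ F := F.max'_mem hFne
    have hkt : w k < t := (Finset.mem_filter.1 hkF).2
    refine ⟨w k, (hwmem k).1, hkt, fun r hr hrt => ?_⟩
    set w' : ℕ → ℝ := fun i => min (w i) r with hw'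
    have hw'mono : Monotone w' := fun i j hij => min_le_min (hw hij) le_rfl
    have hur : u < r := lt_of_le_of_lt (hwmem k).1 hr
    have hw'mem : ∀ i, w' i ∈ Icc u r :=
      fun i => ⟨le_min (hwmem i).1 hur.le, min_le_right _ _⟩
    have hterm : ∀ i ∈ Finset.range n, edist (f (w (i+1))) (f (w i)) ≤
        edist (f (w' (i+1))) (f (w' i)) +
          (if w i < t ∧ t ≤ w (i+1) then edist (f t) (f r) else 0) := by
      intro i hi
      have hi' := Finset.mem_range.1 hi
      rcases lt_or_ge (w (i+1)) t with h1 | h1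
      · have hi1F : i+1 ∈ F := Finset.mem_filter.2 ⟨Finset.mem_range.2 (by omega), h1⟩
        have hle : w (i+1) ≤ w k := hw (F.le_max' _ hi1F)
        have e1 : w' (i+1) = w (i+1) := min_eq_left (le_of_lt (lt_of_le_of_lt hle hr))
        have e0 : w' i = w i :=
          min_eq_left (le_of_lt (lt_of_le_of_lt (le_trans (hw (Nat.le_succ i)) hle) hr))
        rw [e1, e0, if_neg (by push_neg; intro _; exact h1)]
        simp
      · rcases lt_or_ge (w i) t with h0 | h0
        · have hwt : w (i+1) = t := le_antisymm (hwmem (i+1)).2 h1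
          have hiF : i ∈ F := Finset.mem_filter.2 ⟨Finset.mem_range.2 (by omega), h0⟩
          have hle : w i ≤ w k := hw (F.le_max' _ hiF)
          have e0 : w' i = w i := min_eq_left (le_of_lt (lt_of_le_of_lt hle hr))
          have e1 : w' (i+1) = r := by
            rw [hw']; simp only [hwt]; exact min_eq_right hrt.le
          rw [if_pos ⟨h0, h1⟩, hwt, e0, e1]
          calc edist (f t) (f (w i)) ≤ edist (f t) (f r) + edist (f r) (f (w i)) :=
                edist_triangle _ _ _
            _ = edist (f r) (f (w i)) + edist (f t) (f r) := add_comm _ _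
        · have hw0 : w i = t := le_antisymm (hwmem i).2 h0
          have hw1 : w (i+1) = t := le_antisymm (hwmem (i+1)).2 (le_trans h0 (hw (Nat.le_succ i)))
          rw [hw0, hw1]
          simp
    have hite : (∑ i ∈ Finset.range n,
        (if w i < t ∧ t ≤ w (i+1) then edist (f t) (f r) else 0)) ≤ edist (f t) (f r) := by
      rw [← Finset.sum_filter]
      have hcard : ((Finset.range n).filter (fun i => w i < t ∧ t ≤ w (i+1))).card ≤ 1 := by
        rw [Finset.card_le_one]
        intro a ha b hb
        have ha' := Finset.mem_filter.1 ha
        have hb' := Finset.mem_filter.1 hb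
        by_contra hab
        rcases Nat.lt_or_ge a b with h | h
        · exact absurd (lt_of_le_of_lt (le_trans ha'.2.2 (hw h)) hb'.2.1) (lt_irrefl t)
        · have h' : b < a := by omega
          exact absurd (lt_of_le_of_lt (le_trans hb'.2.2 (hw h')) ha'.2.1) (lt_irrefl t)
      rw [Finset.sum_const]
      calc (((Finset.range n).filter fun i => w i < t ∧ t ≤ w (i+1)).card : ℕ)
            • edist (f t) (f r) ≤ 1 • edist (f t) (f r) := smul_le_smul_of_nonneg_right
              (by exact_mod_cast hcard) zero_le
        _ = edist (f t) (f r) := one_smul _ _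
    have hchain : T - ε < eVariationOn f (Icc u r) + edist (f t) (f r) := by
      calc T - ε < ∑ i ∈ Finset.range n, edist (f (w (i+1))) (f (w i)) := hsum
        _ ≤ ∑ i ∈ Finset.range n, (edist (f (w' (i+1))) (f (w' i)) +
              (if w i < t ∧ t ≤ w (i+1) then edist (f t) (f r) else 0)) :=
            Finset.sum_le_sum hterm
        _ = (∑ i ∈ Finset.range n, edist (f (w' (i+1))) (f (w' i))) +
              ∑ i ∈ Finset.range n, (if w i < t ∧ t ≤ w (i+1) then edist (f t) (f r) else 0) :=
            Finset.sum_add_distrib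
        _ ≤ eVariationOn f (Icc u r) + edist (f t) (f r) :=
            add_le_add (eVariationOn.sum_le (f := f) (n := n) hw'mono hw'mem) hite
    exact tsub_le_iff_right.1 hchain.le
  · -- all partition points equal `t`: the sum is zero, contradiction
    exfalso
    have hzero : (∑ i ∈ Finset.range n, edist (f (w (i+1))) (f (w i))) = 0 := by
      refine Finset.sum_eq_zero fun i hi => ?_
      have hi' := Finset.mem_range.1 hi
      have h0 : w i = t := by
        by_contra hne
        have : w i < t := lt_of_le_of_ne (hwmem i).2 hne
        exact hFne ⟨i, Finset.mem_filter.2 ⟨Finset.mem_range.2 (by omega), this⟩⟩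
      have h1 : w (i+1) = t := by
        by_contra hne
        have : w (i+1) < t := lt_of_le_of_ne (hwmem (i+1)).2 hne
        exact hFne ⟨i+1, Finset.mem_filter.2 ⟨Finset.mem_range.2 (by omega), this⟩⟩
      rw [h0, h1, edist_self]
    rw [hzero] at hsum
    exact absurd hsum (by simp)

end KeyClaim
section KeyRight

variable {Y : Type*} [MetricSpace Y]

lemma evar_neg (f : ℝ → Y) (p q : ℝ) :
    eVariationOn (f ∘ fun x : ℝ => -x) (Icc p q) = eVariationOn f (Icc (-q) (-p)) := by
  rw [eVariationOn.comp_eq_of_antitoneOn f _ (fun x _ y _ hxy => neg_le_neg hxy)]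
  congr 1
  simp [Set.image_neg_eq_neg]

lemma key_right (f : ℝ → Y) {t v : ℝ} (htv : t < v)
    (hfin : eVariationOn f (Icc t v) ≠ ⊤) {ε : ℝ≥0∞} (hε : 0 < ε) :
    ∃ s, t < s ∧ s ≤ v ∧ ∀ r, t < r → r < s →
      eVariationOn f (Icc t v) ≤ eVariationOn f (Icc r v) + edist (f t) (f r) + ε := by
  have hfin' : eVariationOn (f ∘ fun x : ℝ => -x) (Icc (-v) (-t)) ≠ ⊤ := by
    rw [evar_neg]; simpa using hfin
  obtain ⟨s', hs'1, hs'2, H⟩ := key_left (f ∘ fun x : ℝ => -x) (by linarith : -v < -t) hfin' hε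
  refine ⟨-s', by linarith, by linarith, fun r hr1 hr2 => ?_⟩
  have := H (-r) (by linarith) (by linarith)
  rw [evar_neg, evar_neg] at this
  simp only [Function.comp_apply, neg_neg] at this
  simpa using this

end KeyRight

section Atom

variable {X : Type*} [MetricSpace X] {I : Set ℝ} {γ : ℝ → X} {ν : Measure ℝ}

lemma nu_singleton (hI : I.OrdConnected)
    (hγ : ∀ a ∈ I, ∀ b ∈ I, a ≤ b → eVariationOn γ (Set.Icc a b) < ⊤)
    (hν : IsSpeedMeasure γ I ν) {t : ℝ} (ht : t ∈ I)
    (hc : ContinuousWithinAt γ I t) : ν {t} = 0 := by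
  have key : ∀ e : ℝ, 0 < e → ν {t} ≤ ENNReal.ofReal e := by
    intro e he
    obtain ⟨δ, hδ, hδp⟩ := Metric.continuousWithinAt_iff.1 hc (e/4) (by linarith)
    have he4 : (0:ℝ≥0∞) < ENNReal.ofReal (e/4) := ENNReal.ofReal_pos.2 (by linarith)
    -- left piece
    have hLbound : ∃ s, s < t ∧
        eVariationOn γ (Ioc s t ∩ I) ≤ ENNReal.ofReal (e/4) + ENNReal.ofReal (e/4) := by
      by_cases hL : ∃ u ∈ I, u < t
      · obtain ⟨u, huI, hut⟩ := hL
        have hfin := (hγ u huI t ht hut.le).ne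
        obtain ⟨s₀, hs₀u, hs₀t, hP⟩ := key_left γ hut hfin he4
        refine ⟨max s₀ (t - δ), max_lt hs₀t (by linarith), ?_⟩
        rw [eVariationOn]
        refine iSup_le ?_
        rintro ⟨n, p, hp, hpmem⟩
        have hp0 := hpmem 0
        have h1 : (∑ i ∈ Finset.range n, edist (γ (p (i+1))) (γ (p i)))
            ≤ eVariationOn γ (Icc (p 0) t) :=
          eVariationOn.sum_le (f := γ) (n := n) hp (fun i => ⟨hp (Nat.zero_le i), (hpmem i).1.2⟩)
        rcases eq_or_lt_of_le hp0.1.2 with heq | hlt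
        · have hsub : (Icc (p 0) t).Subsingleton := by
            rw [heq, Icc_self]; exact subsingleton_singleton
          rw [eVariationOn.subsingleton γ hsub] at h1
          exact le_trans h1 zero_le
        · have hp0I : p 0 ∈ I := hp0.2
          have hup0 : u ≤ p 0 := by
            by_contra hcon
            push_neg at hcon
            exact absurd (lt_trans (lt_of_le_of_lt (le_max_left s₀ (t-δ)) hp0.1.1) hcon)
              (not_lt.2 hs₀u)
          have hsplit : eVariationOn γ (Icc u (p 0)) + eVariationOn γ (Icc (p 0) t)
              = eVariationOn γ (Icc u t) := by
            have h := eVariationOn.Icc_add_Icc γ (s := Icc u t) hup0 hlt.le ⟨hup0, hlt.le⟩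
            rwa [inter_eq_self_of_subset_right (Icc_subset_Icc le_rfl hlt.le),
              inter_eq_self_of_subset_right (Icc_subset_Icc hup0 le_rfl),
              inter_self] at h
          have hP0 := hP (p 0) (lt_of_le_of_lt (le_max_left _ _) hp0.1.1) hlt
          rw [← hsplit, add_assoc] at hP0
          have hfin2 : eVariationOn γ (Icc u (p 0)) ≠ ⊤ := (hγ u huI (p 0) hp0I hup0).ne
          have hcancel : eVariationOn γ (Icc (p 0) t)
              ≤ edist (γ t) (γ (p 0)) + ENNReal.ofReal (e/4) :=
            (ENNReal.add_le_add_iff_left hfin2).1 hP0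
          have hd : edist (γ t) (γ (p 0)) ≤ ENNReal.ofReal (e/4) := by
            have hdist : dist (p 0) t < δ := by
              rw [Real.dist_eq, abs_lt]
              constructor
              · have := hp0.1.1
                have := le_max_right s₀ (t - δ); linarith
              · have := hp0.1.2; linarith
            have := hδp hp0I hdist
            rw [edist_comm, edist_dist]
            exact ENNReal.ofReal_le_ofReal this.le
          exact h1.trans (hcancel.trans (add_le_add hd le_rfl))
      · push_neg at hL
        refine ⟨t - 1, by linarith, ?_⟩
        have hsub : (Ioc (t-1) t ∩ I).Subsingleton := by
          intro x hx y hy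
          have hx' : x = t := le_antisymm hx.1.2 (hL x hx.2)
          have hy' : y = t := le_antisymm hy.1.2 (hL y hy.2)
          rw [hx', hy']
        rw [eVariationOn.subsingleton γ hsub]
        exact zero_le
    -- right piece
    have hRbound : ∃ s', t < s' ∧
        eVariationOn γ (Ico t s' ∩ I) ≤ ENNReal.ofReal (e/4) + ENNReal.ofReal (e/4) := by
      by_cases hR : ∃ v ∈ I, t < v
      · obtain ⟨v, hvI, htv⟩ := hR
        have hfin := (hγ t ht v hvI htv.le).ne
        obtain ⟨s₀, hts₀, hs₀v, hP⟩ := key_right γ htv hfin he4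
        refine ⟨min s₀ (t + δ), lt_min hts₀ (by linarith), ?_⟩
        rw [eVariationOn]
        refine iSup_le ?_
        rintro ⟨n, p, hp, hpmem⟩
        have hpn := hpmem n
        have h1 : (∑ i ∈ Finset.range n, edist (γ (p (i+1))) (γ (p i)))
            ≤ eVariationOn γ (Icc t (p n)) := by
          set w : ℕ → ℝ := fun i => p (min i n) with hwdef
          have hwmono : Monotone w := fun i j hij => hp (min_le_min hij le_rfl)
          have hwmem : ∀ i, w i ∈ Icc t (p n) :=
            fun i => ⟨(hpmem _).1.1, hp (min_le_right _ n)⟩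
          have hsum : (∑ i ∈ Finset.range n, edist (γ (p (i + 1))) (γ (p i)))
              = ∑ i ∈ Finset.range n, edist (γ (w (i + 1))) (γ (w i)) := by
            refine Finset.sum_congr rfl fun i hi => ?_
            have hi' := Finset.mem_range.1 hi
            have h1 : min (i+1) n = i+1 := min_eq_left (by omega)
            have h2 : min i n = i := min_eq_left (by omega)
            rw [hwdef]; simp only [h1, h2]
          rw [hsum]
          exact eVariationOn.sum_le (f := γ) (n := n) hwmono hwmem
        rcases eq_or_lt_of_le hpn.1.1 with heq | hlt
        · have hsub : (Icc t (p n)).Subsingleton := by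
            rw [← heq, Icc_self]; exact subsingleton_singleton
          rw [eVariationOn.subsingleton γ hsub] at h1
          exact le_trans h1 zero_le
        · have hpnI : p n ∈ I := hpn.2
          have hpnv : p n ≤ v :=
            le_trans (le_of_lt (lt_of_lt_of_le hpn.1.2 (min_le_left _ _))) hs₀v
          have hsplit : eVariationOn γ (Icc t (p n)) + eVariationOn γ (Icc (p n) v)
              = eVariationOn γ (Icc t v) := by
            have h := eVariationOn.Icc_add_Icc γ (s := Icc t v) hlt.le hpnv ⟨hlt.le, hpnv⟩
            rwa [inter_eq_self_of_subset_right (Icc_subset_Icc le_rfl hpnv),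
              inter_eq_self_of_subset_right (Icc_subset_Icc hlt.le le_rfl),
              inter_self] at h
          have hP0 := hP (p n) hlt (lt_of_lt_of_le hpn.1.2 (min_le_left _ _))
          rw [← hsplit] at hP0
          have hre : eVariationOn γ (Icc (p n) v) + eVariationOn γ (Icc t (p n))
              ≤ eVariationOn γ (Icc (p n) v) + (edist (γ t) (γ (p n)) + ENNReal.ofReal (e/4)) := by
            calc eVariationOn γ (Icc (p n) v) + eVariationOn γ (Icc t (p n))
                = eVariationOn γ (Icc t (p n)) + eVariationOn γ (Icc (p n) v) := add_comm _ _
              _ ≤ eVariationOn γ (Icc (p n) v) + edist (γ t) (γ (p n)) + ENNReal.ofReal (e/4) :=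
                  hP0
              _ = eVariationOn γ (Icc (p n) v) + (edist (γ t) (γ (p n)) + ENNReal.ofReal (e/4)) :=
                  by rw [add_assoc]
          have hfin2 : eVariationOn γ (Icc (p n) v) ≠ ⊤ := (hγ (p n) hpnI v hvI hpnv).ne
          have hcancel : eVariationOn γ (Icc t (p n))
              ≤ edist (γ t) (γ (p n)) + ENNReal.ofReal (e/4) :=
            (ENNReal.add_le_add_iff_left hfin2).1 hre
          have hd : edist (γ t) (γ (p n)) ≤ ENNReal.ofReal (e/4) := by
            have hdist : dist (p n) t < δ := by
              rw [Real.dist_eq, abs_lt]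
              constructor
              · have := hpn.1.1; linarith
              · have h2 := hpn.1.2
                have := min_le_right s₀ (t + δ); linarith
            have := hδp hpnI hdist
            rw [edist_comm, edist_dist]
            exact ENNReal.ofReal_le_ofReal this.le
          exact h1.trans (hcancel.trans (add_le_add hd le_rfl))
      · push_neg at hR
        refine ⟨t + 1, by linarith, ?_⟩
        have hsub : (Ico t (t+1) ∩ I).Subsingleton := by
          intro x hx y hy
          have hx' : x = t := le_antisymm (hR x hx.2) hx.1.1
          have hy' : y = t := le_antisymm (hR y hy.2) hy.1.1
          rw [hx', hy']
        rw [eVariationOn.subsingleton γ hsub]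
        exact zero_le
    obtain ⟨s, hst, hsb⟩ := hLbound
    obtain ⟨s', hts', hs'b⟩ := hRbound
    have hsplitset : Ioo s s' ∩ I = (Ioc s t ∩ I) ∪ (Ico t s' ∩ I) := by
      ext x
      simp only [mem_inter_iff, mem_Ioo, mem_Ioc, mem_Ico, mem_union]
      constructor
      · rintro ⟨⟨h1, h2⟩, hxI⟩
        rcases le_total x t with h | h
        · exact Or.inl ⟨⟨h1, h⟩, hxI⟩
        · exact Or.inr ⟨⟨h, h2⟩, hxI⟩
      · rintro (⟨⟨h1, h2⟩, hxI⟩ | ⟨⟨h1, h2⟩, hxI⟩)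
        · exact ⟨⟨h1, lt_of_le_of_lt h2 hts'⟩, hxI⟩
        · exact ⟨⟨lt_of_lt_of_le hst h1, h2⟩, hxI⟩
    have hgreat : IsGreatest (Ioc s t ∩ I) t := ⟨⟨⟨hst, le_rfl⟩, ht⟩, fun x hx => hx.1.2⟩
    have hleast : IsLeast (Ico t s' ∩ I) t := ⟨⟨⟨le_rfl, hts'⟩, ht⟩, fun x hx => hx.1.1⟩
    calc ν {t} ≤ ν (Ioo s s' ∩ I) := measure_mono (by
          intro x hx
          rw [mem_singleton_iff] at hx
          subst hx
          exact ⟨⟨hst, hts'⟩, ht⟩)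
      _ = eVariationOn γ (Ioo s s' ∩ I) := nu_relopen hI hν s s'
      _ = eVariationOn γ (Ioc s t ∩ I) + eVariationOn γ (Ico t s' ∩ I) := by
          rw [hsplitset]; exact eVariationOn.union γ hgreat hleast
      _ ≤ (ENNReal.ofReal (e/4) + ENNReal.ofReal (e/4)) +
            (ENNReal.ofReal (e/4) + ENNReal.ofReal (e/4)) := add_le_add hsb hs'b
      _ ≤ ENNReal.ofReal e := by
          rw [← ENNReal.ofReal_add (by linarith) (by linarith),
            ← ENNReal.ofReal_add (by linarith) (by linarith)]
          apply ENNReal.ofReal_le_ofReal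
          linarith
  refine le_antisymm ?_ zero_le
  refine ENNReal.le_of_forall_pos_le_add fun e he _ => ?_
  rw [zero_add]
  calc ν {t} ≤ ENNReal.ofReal e := key e (by exact_mod_cast he)
    _ = (e : ℝ≥0∞) := ENNReal.ofReal_coe_nnreal
end Atom
section MeasureHelpers

/-- Two measures agreeing on closed subintervals of `(a,b)` have equal restrictions. -/
lemma restrict_eq_of_Icc {μ₁ μ₂ : Measure ℝ} {a b : ℝ} (hab : a < b)
    (hfin : μ₁ (Ioo a b) ≠ ⊤)
    (h : ∀ s t, a < s → s ≤ t → t < b → μ₁ (Icc s t) = μ₂ (Icc s t)) :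
    μ₁.restrict (Ioo a b) = μ₂.restrict (Ioo a b) := by
  have claimIoo : ∀ A B, a ≤ A → B ≤ b → μ₁ (Ioo A B) = μ₂ (Ioo A B) := by
    intro A B hA hB
    rcases le_or_gt B A with hBA | hAB
    · rw [Ioo_eq_empty (not_lt.2 hBA)]; simp
    · set d := B - A with hd
      have hd0 : 0 < d := by simp [hd]; linarith
      have hun : (⋃ n : ℕ, Icc (A + d/(2*(n+2))) (B - d/(2*(n+2)))) = Ioo A B := by
        ext x
        simp only [mem_iUnion, mem_Icc, mem_Ioo]
        constructor
        · rintro ⟨n, h1, h2⟩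
          have : (0:ℝ) < d/(2*(n+2)) := by positivity
          constructor <;> linarith
        · rintro ⟨h1, h2⟩
          have hmin : (0:ℝ) < min (x - A) (B - x) := lt_min (by linarith) (by linarith)
          obtain ⟨n, hn⟩ := exists_nat_one_div_lt
            (show (0:ℝ) < min (x - A) (B - x) / d from div_pos hmin hd0)
          have h4 : d/((n:ℝ)+1) < min (x-A) (B-x) := by
            rw [div_lt_div_iff₀ (by positivity) hd0] at hn
            rw [div_lt_iff₀ (by positivity : (0:ℝ) < (n:ℝ)+1)]
            linarith
          have h6 : d/(2*((n:ℝ)+2)) ≤ d/((n:ℝ)+1) := by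
            apply div_le_div_of_nonneg_left hd0.le (by positivity)
            linarith
          have h5l := min_le_left (x-A) (B-x)
          have h5r := min_le_right (x-A) (B-x)
          exact ⟨n, by linarith, by linarith⟩
      have hmono : Monotone (fun n : ℕ => Icc (A + d/(2*(n+2))) (B - d/(2*(n+2)))) := by
        intro n m hnm
        have h1 : (d:ℝ)/(2*(m+2)) ≤ d/(2*(n+2)) := by
          apply div_le_div_of_nonneg_left hd0.le (by positivity)
          have : (n:ℝ) ≤ m := by exact_mod_cast hnm
          linarith
        exact Icc_subset_Icc (by linarith) (by linarith)
      have ht1 := tendsto_measure_iUnion_atTop (μ := μ₁) hmono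
      have ht2 := tendsto_measure_iUnion_atTop (μ := μ₂) hmono
      rw [hun] at ht1 ht2
      have heq : ∀ n : ℕ, μ₁ (Icc (A + d/(2*(n+2))) (B - d/(2*(n+2))))
          = μ₂ (Icc (A + d/(2*(n+2))) (B - d/(2*(n+2)))) := by
        intro n
        rcases le_or_gt (A + d/(2*(n+2))) (B - d/(2*(n+2))) with hle | hlt
        · have hpos : (0:ℝ) < d/(2*((n:ℝ)+2)) := by positivity
          exact h _ _ (by linarith) hle (by linarith)
        · rw [Icc_eq_empty (not_le.2 hlt)]; simp
      exact tendsto_nhds_unique (ht1.congr fun n => heq n) ht2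
  have claimsingleton : ∀ x, a < x → x < b → μ₁ {x} = μ₂ {x} := by
    intro x h1 h2
    have := h x x h1 le_rfl h2
    rwa [Icc_self] at this
  have claimIoc : ∀ A t, a ≤ A → t < b → μ₁ (Ioc A t) = μ₂ (Ioc A t) := by
    intro A t hA htb
    rcases le_or_gt t A with hle | hlt
    · rw [Ioc_eq_empty (not_lt.2 hle)]; simp
    · have hsplit : Ioc A t = Ioo A t ∪ {t} := by
        ext x
        simp only [mem_Ioc, mem_Ioo, mem_union, mem_singleton_iff]
        constructor
        · rintro ⟨h1, h2⟩
          rcases eq_or_lt_of_le h2 with h3 | h3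
          · exact Or.inr h3
          · exact Or.inl ⟨h1, h3⟩
        · rintro (⟨h1, h2⟩ | rfl)
          · exact ⟨h1, h2.le⟩
          · exact ⟨hlt, le_rfl⟩
      have hdisj : Disjoint (Ioo A t) {t} := by
        rw [disjoint_singleton_right]
        exact fun hx => absurd hx.2 (lt_irrefl t)
      rw [hsplit, measure_union hdisj (measurableSet_singleton t),
        measure_union hdisj (measurableSet_singleton t),
        claimIoo A t hA htb.le, claimsingleton t (lt_of_le_of_lt hA hlt) htb]
  haveI : IsFiniteMeasure (μ₁.restrict (Ioo a b)) := by
    constructor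
    rw [Measure.restrict_apply_univ]
    exact lt_top_iff_ne_top.2 hfin
  refine Measure.ext_of_Ioc_finite _ _ ?_ ?_
  · rw [Measure.restrict_apply_univ, Measure.restrict_apply_univ]
    exact claimIoo a b le_rfl le_rfl
  · intro s t hst
    rw [Measure.restrict_apply measurableSet_Ioc, Measure.restrict_apply measurableSet_Ioc]
    have hseteq : Ioc s t ∩ Ioo a b =
        if t < b then Ioc (max s a) t else Ioo (max s a) b := by
      split_ifs with htb
      · ext x
        simp only [mem_inter_iff, mem_Ioc, mem_Ioo, max_lt_iff]
        constructor
        · rintro ⟨⟨h1, h2⟩, h3, h4⟩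
          exact ⟨⟨h1, h3⟩, h2⟩
        · rintro ⟨⟨h1, h2⟩, h3⟩
          exact ⟨⟨h1, h3⟩, h2, lt_of_le_of_lt h3 htb⟩
      · push_neg at htb
        ext x
        simp only [mem_inter_iff, mem_Ioc, mem_Ioo, max_lt_iff]
        constructor
        · rintro ⟨⟨h1, h2⟩, h3, h4⟩
          exact ⟨⟨h1, h3⟩, h4⟩
        · rintro ⟨⟨h1, h2⟩, h3⟩
          exact ⟨⟨h1, le_trans h3.le htb⟩, h2, h3⟩
    rw [hseteq]
    split_ifs with htb
    · exact claimIoc (max s a) t (le_max_right s a) htb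
    · exact claimIoo (max s a) b (le_max_right s a) le_rfl

/-- The singular part of a restriction is the restriction of the singular part. -/
lemma singularPart_restrict (μ : Measure ℝ) [IsFiniteMeasure μ] {E : Set ℝ}
    (hE : MeasurableSet E) :
    (μ.restrict E).singularPart volume = (μ.singularPart volume).restrict E := by
  symm
  refine Measure.eq_singularPart (f := E.indicator (μ.rnDeriv volume))
    ((Measure.measurable_rnDeriv μ volume).indicator hE) ?_ ?_
  · exact (Measure.mutuallySingular_singularPart μ volume).mono
      Measure.restrict_le_self le_rfl
  · rw [withDensity_indicator hE, ← MeasureTheory.restrict_withDensity hE,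
      ← Measure.restrict_add, ← μ.haveLebesgueDecomposition_add volume]

/-- Uniqueness transfer: a given Lebesgue-type decomposition identifies the singular part
of a finite restriction. -/
lemma restrict_singular_eq {ρ ρac ρs : Measure ℝ} (h : ρ = ρac + ρs) (hac : ρac ≪ volume)
    (hs : ρs ⟂ₘ volume) {E : Set ℝ} (hE : MeasurableSet E) (hfin : ρ E ≠ ⊤) :
    ρs.restrict E = (ρ.restrict E).singularPart volume := by
  have hacE : ρac.restrict E ≪ volume :=
    (Measure.absolutelyContinuous_of_le Measure.restrict_le_self).trans hac
  haveI : IsFiniteMeasure (ρac.restrict E) := by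
    constructor
    rw [Measure.restrict_apply_univ]
    have : ρac E ≤ ρ E := by
      rw [h, Measure.add_apply]
      exact le_add_right le_rfl
    exact lt_of_le_of_lt this (lt_top_iff_ne_top.2 hfin)
  refine Measure.eq_singularPart (f := (ρac.restrict E).rnDeriv volume)
    (Measure.measurable_rnDeriv _ _) (hs.mono Measure.restrict_le_self le_rfl) ?_
  rw [Measure.withDensity_rnDeriv_eq _ _ hacE, h, Measure.restrict_add, add_comm]

end MeasureHelpers
section StieltjesUtil

open Function

lemma stieltjes_finite {f : ℝ → ℝ} (hf : Monotone f) {a b : ℝ}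
    (hl : ∀ x, x ≤ a → f x = f a) (hr : ∀ x, b ≤ x → f x = f b) :
    IsFiniteMeasure hf.stieltjesFunction.measure := by
  have hbot : Tendsto (hf.stieltjesFunction : ℝ → ℝ) atBot (𝓝 (f a)) := by
    have heq : ∀ x, x < a → (hf.stieltjesFunction : ℝ → ℝ) x = f a := by
      intro x hx
      rw [hf.stieltjesFunction_eq]
      apply rightLim_eq_of_tendsto (α := ℝ)
      apply Tendsto.congr' _ (tendsto_const_nhds (α := ℝ))
      filter_upwards [Ioo_mem_nhdsGT_of_mem (⟨le_rfl, hx⟩ : x ∈ Ico x a)] with y hy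
      exact (hl y hy.2.le).symm
    apply Tendsto.congr' _ (tendsto_const_nhds (α := ℝ))
    filter_upwards [eventually_lt_atBot a] with y hy
    exact (heq y hy).symm
  have htop : Tendsto (hf.stieltjesFunction : ℝ → ℝ) atTop (𝓝 (f b)) := by
    have heq : ∀ x, b ≤ x → (hf.stieltjesFunction : ℝ → ℝ) x = f b := by
      intro x hx
      rw [hf.stieltjesFunction_eq]
      apply rightLim_eq_of_tendsto (α := ℝ)
      apply Tendsto.congr' _ (tendsto_const_nhds (α := ℝ))
      filter_upwards [self_mem_nhdsWithin] with y hy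
      exact (hr y (le_trans hx (le_of_lt hy))).symm
    apply Tendsto.congr' _ (tendsto_const_nhds (α := ℝ))
    filter_upwards [eventually_ge_atTop b] with y hy
    exact (heq y hy).symm
  exact ⟨by
    rw [StieltjesFunction.measure_univ _ hbot htop]
    exact ENNReal.ofReal_lt_top⟩

lemma leftLim_stieltjes {f : ℝ → ℝ} (hf : Monotone f) (x : ℝ) :
    leftLim (hf.stieltjesFunction : ℝ → ℝ) x = leftLim f x := by
  apply leftLim_eq_of_tendsto (α := ℝ)
  have h1 : Tendsto f (𝓝[<] x) (𝓝 (leftLim f x)) := hf.tendsto_leftLim x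
  have hm : Tendsto (fun y : ℝ => (y + x)/2) (𝓝[<] x) (𝓝[<] x) := by
    apply tendsto_nhdsWithin_of_tendsto_nhds_of_eventually_within
    · have : Tendsto (fun y : ℝ => (y + x)/2) (𝓝 x) (𝓝 ((x + x)/2)) :=
        (tendsto_id.add_const x).div_const 2
      rw [show (x + x)/2 = x by ring] at this
      exact this.mono_left nhdsWithin_le_nhds
    · filter_upwards [self_mem_nhdsWithin] with y hy
      have : y < x := hy
      exact mem_Iio.2 (by linarith)
  have h2 : Tendsto (fun y => f ((y + x)/2)) (𝓝[<] x) (𝓝 (leftLim f x)) := h1.comp hm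
  apply tendsto_of_tendsto_of_tendsto_of_le_of_le' h1 h2
  · exact Eventually.of_forall fun y => by
      rw [hf.stieltjesFunction_eq]; exact hf.le_rightLim le_rfl
  · filter_upwards [self_mem_nhdsWithin] with y hy
    have hyx : y < x := hy
    rw [hf.stieltjesFunction_eq]
    exact hf.rightLim_le (by linarith)

lemma rightLim_add_monotone {f g : ℝ → ℝ} (hf : Monotone f) (hg : Monotone g) (x : ℝ) :
    rightLim (fun z => f z + g z) x = rightLim f x + rightLim g x := by
  apply rightLim_eq_of_tendsto (α := ℝ)
  exact (hf.tendsto_rightLim x).add (hg.tendsto_rightLim x)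

lemma rightLim_two_mul {f : ℝ → ℝ} (hf : Monotone f) (x : ℝ) :
    rightLim (fun z => 2 * f z) x = 2 * rightLim f x := by
  apply rightLim_eq_of_tendsto (α := ℝ)
  exact (hf.tendsto_rightLim x).const_mul 2

end StieltjesUtil
section Core

open Function

lemma core {X : Type*} [MetricSpace X] {I : Set ℝ} (hI : I.OrdConnected) {γ : ℝ → X}
    (hγ : ∀ a ∈ I, ∀ b ∈ I, a ≤ b → eVariationOn γ (Set.Icc a b) < ⊤)
    {ν νac νsing : Measure ℝ} (hν : IsSpeedMeasure γ I ν)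
    (hdecomp : ν = νac + νsing) (hac : νac ≪ volume) (hsing : νsing ⟂ₘ volume)
    {D : ℝ → ℝ} (hDmeas : Measurable D)
    (hD : ∀ᵐ t ∂(volume.restrict I),
      Tendsto (fun s => dist (γ s) (γ t) / |s - t|) (𝓝[I \ {t}] t) (𝓝 (D t)))
    {a b : ℝ} (ha : a ∈ I) (hb : b ∈ I) (hab : a < b) :
    νac (Icc a b) = volume.withDensity (fun t => ENNReal.ofReal (D t)) (Icc a b) := by
  set w : Measure ℝ := volume.withDensity (fun t => ENNReal.ofReal (D t)) with hw
  have hIccI : Icc a b ⊆ I := hI.out ha hb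
  have hvar_fin : ∀ u v, u ∈ Icc a b → v ∈ Icc a b → eVariationOn γ (Icc u v) ≠ ⊤ := by
    intro u v hu hv
    refine (lt_of_le_of_lt (eVariationOn.mono γ ?_) (hγ a ha b hb hab.le)).ne
    exact fun z hz => ⟨le_trans hu.1 hz.1, le_trans hz.2 hv.2⟩
  have lbv : LocallyBoundedVariationOn γ (Icc a b) := fun u v _ _ =>
    (lt_of_le_of_lt (eVariationOn.mono γ inter_subset_left) (hγ a ha b hb hab.le)).ne
  have haIcc : a ∈ Icc a b := ⟨le_rfl, hab.le⟩
  -- the clamped variation function V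
  set c : ℝ → ℝ := fun x => max a (min b x) with hcdef
  have hc_mem : ∀ x, c x ∈ Icc a b := fun x => ⟨le_max_left _ _, max_le hab.le (min_le_left _ _)⟩
  have hc_mono : Monotone c := fun x y hxy => max_le_max le_rfl (min_le_min le_rfl hxy)
  have hc_eq : ∀ x, x ∈ Icc a b → c x = x := by
    intro x hx
    rw [hcdef]
    simp only
    rw [min_eq_right hx.2, max_eq_right hx.1]
  set V : ℝ → ℝ := fun x => variationOnFromTo γ (Icc a b) a (c x) with hVdef
  have hV_mono : Monotone V := fun x y hxy =>
    variationOnFromTo.monotoneOn lbv haIcc (hc_mem x) (hc_mem y) (hc_mono hxy)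
  have hV_between : ∀ u v, u ∈ Icc a b → v ∈ Icc a b → u ≤ v →
      V v - V u = (eVariationOn γ (Icc u v)).toReal := by
    intro u v hu hv huv
    have e1 : V v = variationOnFromTo γ (Icc a b) a v := by
      simp only [hVdef]; rw [hc_eq v hv]
    have e2 : V u = variationOnFromTo γ (Icc a b) a u := by
      simp only [hVdef]; rw [hc_eq u hu]
    have hadd := variationOnFromTo.add lbv haIcc hu hv
    have e3 : variationOnFromTo γ (Icc a b) u v = (eVariationOn γ (Icc u v)).toReal := by
      rw [variationOnFromTo.eq_of_le γ _ huv,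
        inter_eq_self_of_subset_right (Icc_subset_Icc hu.1 hv.2)]
    rw [e1, e2, ← hadd, e3]; ring
  have hV_evar : ∀ u v, u ∈ Icc a b → v ∈ Icc a b → u ≤ v →
      eVariationOn γ (Icc u v) = ENNReal.ofReal (V v - V u) := by
    intro u v hu hv huv
    rw [hV_between u v hu hv huv, ENNReal.ofReal_toReal (hvar_fin u v hu hv)]
  have hdistV : ∀ u v, u ∈ Icc a b → v ∈ Icc a b → u ≤ v → dist (γ v) (γ u) ≤ V v - V u := by
    intro u v hu hv huv
    rw [hV_between u v hu hv huv, dist_edist]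
    apply ENNReal.toReal_mono (hvar_fin u v hu hv)
    exact eVariationOn.edist_le γ ⟨huv, le_rfl⟩ ⟨le_rfl, huv⟩
  -- a dense sequence in the closure of the image
  have hdense : ∃ y : ℕ → X, ∀ x ∈ Icc a b, ∀ e : ℝ, 0 < e → ∃ n, dist (γ x) (y n) < e := by
    classical
    have hC0count : ((Set.range ((↑) : ℚ → ℝ)) ∪ {x | ¬ContinuousAt V x} ∪ ({a, b} : Set ℝ)).Countable :=
      ((countable_range _).union hV_mono.countable_not_continuousAt).union
        (Set.toFinite _).countable
    have hTcount : ((fun z => γ (c z)) ''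
        ((Set.range ((↑) : ℚ → ℝ)) ∪ {x | ¬ContinuousAt V x} ∪ ({a, b} : Set ℝ))).Countable :=
      hC0count.image _
    have hTne : ((fun z => γ (c z)) ''
        ((Set.range ((↑) : ℚ → ℝ)) ∪ {x | ¬ContinuousAt V x} ∪ ({a, b} : Set ℝ))).Nonempty :=
      ⟨γ (c a), ⟨a, mem_union_right _ (mem_insert _ _), rfl⟩⟩
    obtain ⟨y, hy⟩ := hTcount.exists_eq_range hTne
    refine ⟨y, fun x hx e he => ?_⟩
    by_cases hmem : x ∈ (Set.range ((↑) : ℚ → ℝ)) ∪ {x | ¬ContinuousAt V x} ∪ ({a, b} : Set ℝ)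
    · have hmemT : γ x ∈ Set.range y := by
        rw [← hy]
        exact ⟨x, hmem, by simp only; rw [hc_eq x hx]⟩
      obtain ⟨n, hn⟩ := hmemT
      exact ⟨n, by rw [hn]; simpa using he⟩
    · have hVcont : ContinuousAt V x := by
        by_contra hcon
        exact hmem (mem_union_left _ (mem_union_right _ hcon))
      have hxa : a < x := by
        rcases eq_or_lt_of_le hx.1 with h | h
        · exact absurd (mem_union_right _
            (show x ∈ ({a, b} : Set ℝ) by rw [← h]; exact mem_insert _ _)) hmem
        · exact h
      obtain ⟨δ, hδ0, hδ⟩ := Metric.continuousAt_iff.1 hVcont e he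
      obtain ⟨q, hq1, hq2⟩ :=
        exists_rat_btwn (show max a (x - δ) < x from max_lt hxa (by linarith))
      have hq_mem : (q:ℝ) ∈ Icc a b :=
        ⟨le_of_lt (lt_of_le_of_lt (le_max_left _ _) hq1), le_trans hq2.le hx.2⟩
      have hdq : dist (γ x) (γ (q:ℝ)) ≤ V x - V (q:ℝ) := hdistV (q:ℝ) x hq_mem hx hq2.le
      have hVd : V x - V (q:ℝ) < e := by
        have hd : dist (q:ℝ) x < δ := by
          rw [Real.dist_eq, abs_lt]
          constructor
          · have := le_max_right a (x - δ)
            linarith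
          · linarith
        have h1 := hδ hd
        rw [Real.dist_eq] at h1
        have h2 := abs_lt.1 h1
        linarith [h2.1]
      have hγq : γ (q:ℝ) ∈ Set.range y := by
        rw [← hy]
        exact ⟨(q:ℝ), mem_union_left _ (mem_union_left _ ⟨q, rfl⟩),
          by simp only; rw [hc_eq _ hq_mem]⟩
      obtain ⟨n, hn⟩ := hγq
      refine ⟨n, ?_⟩
      rw [hn]
      exact lt_of_le_of_lt hdq hVd
  obtain ⟨y, hy_dense⟩ := hdense
  set ψ : ℕ → ℝ → ℝ := fun n x => dist (γ (c x)) (y n) with hψdef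
  have hVc : ∀ x, V (c x) = V x := by
    intro x
    rw [hVdef]
    simp only
    rw [hc_eq (c x) (hc_mem x)]
  have hψ_lip : ∀ n u v, u ≤ v → |ψ n v - ψ n u| ≤ V v - V u := by
    intro n u v huv
    have h := hdistV (c u) (c v) (hc_mem u) (hc_mem v) (hc_mono huv)
    rw [hVc, hVc] at h
    exact le_trans (abs_dist_sub_le _ _ _) h
  set P : ℕ → ℝ → ℝ := fun n x => V x + ψ n x with hPdef
  set Q : ℕ → ℝ → ℝ := fun n x => V x - ψ n x with hQdef
  have hP_mono : ∀ n, Monotone (P n) := by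
    intro n u v huv
    have h2 := abs_le.1 (hψ_lip n u v huv)
    simp only [hPdef]
    linarith [h2.1]
  have hQ_mono : ∀ n, Monotone (Q n) := by
    intro n u v huv
    have h2 := abs_le.1 (hψ_lip n u v huv)
    simp only [hQdef]
    linarith [h2.2]
  -- Stieltjes measures
  set σ : Measure ℝ := hV_mono.stieltjesFunction.measure with hσdef
  set σP : ℕ → Measure ℝ := fun n => (hP_mono n).stieltjesFunction.measure with hσPdef
  set σQ : ℕ → Measure ℝ := fun n => (hQ_mono n).stieltjesFunction.measure with hσQdef
  have hc_left : ∀ x, x ≤ a → c x = a := by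
    intro x hx
    rw [hcdef]
    simp only
    rw [max_eq_left (le_trans (min_le_right b x) hx)]
  have hc_right : ∀ x, b ≤ x → c x = b := by
    intro x hx
    rw [hcdef]
    simp only
    rw [min_eq_left hx, max_eq_right hab.le]
  have hV_left : ∀ x, x ≤ a → V x = V a := by
    intro x hx
    rw [hVdef]
    simp only
    rw [hc_left x hx, hc_left a le_rfl]
  have hV_right : ∀ x, b ≤ x → V x = V b := by
    intro x hx
    rw [hVdef]
    simp only
    rw [hc_right x hx, hc_right b le_rfl]
  have hψ_left : ∀ n x, x ≤ a → ψ n x = ψ n a := by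
    intro n x hx
    rw [hψdef]
    simp only
    rw [hc_left x hx, hc_left a le_rfl]
  have hψ_right : ∀ n x, b ≤ x → ψ n x = ψ n b := by
    intro n x hx
    rw [hψdef]
    simp only
    rw [hc_right x hx, hc_right b le_rfl]
  haveI hσfin : IsFiniteMeasure σ := stieltjes_finite hV_mono hV_left hV_right
  have hσPfin : ∀ n, IsFiniteMeasure (σP n) := fun n =>
    stieltjes_finite (hP_mono n)
      (fun x hx => by simp only [hPdef]; rw [hV_left x hx, hψ_left n x hx])
      (fun x hx => by simp only [hPdef]; rw [hV_right x hx, hψ_right n x hx])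
  have hσQfin : ∀ n, IsFiniteMeasure (σQ n) := fun n =>
    stieltjes_finite (hQ_mono n)
      (fun x hx => by simp only [hQdef]; rw [hV_left x hx, hψ_left n x hx])
      (fun x hx => by simp only [hQdef]; rw [hV_right x hx, hψ_right n x hx])
  have hσIoc : ∀ s t : ℝ, σ (Ioc s t) = ENNReal.ofReal (rightLim V t - rightLim V s) := by
    intro s t
    rw [hσdef, StieltjesFunction.measure_Ioc, hV_mono.stieltjesFunction_eq,
      hV_mono.stieltjesFunction_eq]
  have hσsingleton : ∀ t : ℝ, σ {t} = ENNReal.ofReal (rightLim V t - leftLim V t) := by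
    intro t
    rw [hσdef, StieltjesFunction.measure_singleton, hV_mono.stieltjesFunction_eq,
      leftLim_stieltjes hV_mono]
  -- step (i): σ equals ν on interior closed intervals
  have hσν : ∀ s t, a < s → s ≤ t → t < b → σ (Icc s t) = ν (Icc s t) := by
    intro s t hs hst htb
    obtain ⟨N, hN⟩ := exists_nat_one_div_lt
      (show (0:ℝ) < min (s - a) (b - t) from lt_min (by linarith) (by linarith))
    have hsmall : ∀ n : ℕ, N ≤ n → 1/((n:ℝ)+1) < min (s-a) (b-t) := by
      intro n hn
      refine lt_of_le_of_lt ?_ hN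
      apply one_div_le_one_div_of_le (by positivity)
      exact_mod_cast by omega
    have hmemL : ∀ n : ℕ, N ≤ n → s - 1/((n:ℝ)+1) ∈ Icc a b := by
      intro n hn
      have h1 := hsmall n hn
      have h2 := min_le_left (s-a) (b-t)
      have h3 : (0:ℝ) < 1/((n:ℝ)+1) := by positivity
      exact ⟨by linarith, by linarith⟩
    have hmemR : ∀ n : ℕ, N ≤ n → t + 1/((n:ℝ)+1) ∈ Icc a b := by
      intro n hn
      have h1 := hsmall n hn
      have h2 := min_le_right (s-a) (b-t)
      have h3 : (0:ℝ) < 1/((n:ℝ)+1) := by positivity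
      exact ⟨by linarith, by linarith⟩
    have hle' : ∀ n : ℕ, s - 1/((n:ℝ)+1) ≤ t + 1/((n:ℝ)+1) := by
      intro n
      have h3 : (0:ℝ) < 1/((n:ℝ)+1) := by positivity
      linarith
    have hνfin' : ν (Icc (s - 1/((N:ℝ)+1)) (t + 1/((N:ℝ)+1))) ≠ ⊤ := by
      refine (lt_of_le_of_lt (measure_mono ?_) (nu_Icc_lt_top hI hγ hν ha hb hab.le)).ne
      exact Icc_subset_Icc (hmemL N le_rfl).1 (hmemR N le_rfl).2
    have dir1 : σ (Icc s t) ≤ ν (Icc s t) := by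
      have h1 := tendsto_measure_Ioc_shrink σ hst ⟨0, measure_ne_top σ _⟩
      have h2 := tendsto_measure_Icc_shrink ν hst one_pos ⟨N, hνfin'⟩
      refine le_of_tendsto_of_tendsto h1 h2 ?_
      filter_upwards [eventually_ge_atTop N] with n hn
      have hL := hmemL n hn
      have hR := hmemR n hn
      have h3 : (0:ℝ) < 1/((n:ℝ)+1) := by positivity
      calc σ (Ioc (s - 1/((n:ℝ)+1)) t)
          = ENNReal.ofReal (rightLim V t - rightLim V (s - 1/((n:ℝ)+1))) := hσIoc _ _
        _ ≤ ENNReal.ofReal (V (t + 1/((n:ℝ)+1)) - V (s - 1/((n:ℝ)+1))) := by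
            apply ENNReal.ofReal_le_ofReal
            have hup : rightLim V t ≤ V (t + 1/((n:ℝ)+1)) :=
              hV_mono.rightLim_le (by linarith)
            have hlow : V (s - 1/((n:ℝ)+1)) ≤ rightLim V (s - 1/((n:ℝ)+1)) :=
              hV_mono.le_rightLim le_rfl
            linarith
        _ = eVariationOn γ (Icc (s - 1/((n:ℝ)+1)) (t + 1/((n:ℝ)+1))) :=
            (hV_evar _ _ hL hR (hle' n)).symm
        _ ≤ ν (Icc (s - 1/((n:ℝ)+1)) (t + 1/((n:ℝ)+1))) :=
            var_Icc_le_nu hI hγ hν (hIccI hL) (hIccI hR) (hle' n)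
    have dir2 : ν (Icc s t) ≤ σ (Icc s t) := by
      have h2 := tendsto_measure_Icc_shrink σ hst (show (0:ℝ) < 2 by norm_num)
        ⟨0, measure_ne_top σ _⟩
      refine ge_of_tendsto h2 ?_
      filter_upwards [eventually_ge_atTop N] with n hn
      have hL := hmemL n hn
      have hR := hmemR n hn
      have h3 : (0:ℝ) < 1/((n:ℝ)+1) := by positivity
      have h12 : (1:ℝ)/((n:ℝ)+1) < 2/((n:ℝ)+1) := by
        apply (div_lt_div_iff_of_pos_right (by positivity : (0:ℝ) < (n:ℝ)+1)).2
        norm_num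
      calc ν (Icc s t) ≤ ν (Ioo (s - 1/((n:ℝ)+1)) (t + 1/((n:ℝ)+1)) ∩ I) := by
            apply measure_mono
            intro x hx
            exact ⟨⟨by linarith [hx.1], by linarith [hx.2]⟩,
              hIccI ⟨by linarith [hx.1], by linarith [hx.2]⟩⟩
        _ = eVariationOn γ (Ioo (s - 1/((n:ℝ)+1)) (t + 1/((n:ℝ)+1)) ∩ I) :=
            nu_relopen hI hν _ _
        _ ≤ eVariationOn γ (Icc (s - 1/((n:ℝ)+1)) (t + 1/((n:ℝ)+1))) :=
            eVariationOn.mono γ (fun x hx => ⟨hx.1.1.le, hx.1.2.le⟩)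
        _ = ENNReal.ofReal (V (t + 1/((n:ℝ)+1)) - V (s - 1/((n:ℝ)+1))) :=
            hV_evar _ _ hL hR (hle' n)
        _ ≤ σ (Ioc (s - 2/((n:ℝ)+1)) (t + 1/((n:ℝ)+1))) := by
            rw [hσIoc]
            apply ENNReal.ofReal_le_ofReal
            have hu : rightLim V (s - 2/((n:ℝ)+1)) ≤ V (s - 1/((n:ℝ)+1)) :=
              hV_mono.rightLim_le (by linarith)
            have hv : V (t + 1/((n:ℝ)+1)) ≤ rightLim V (t + 1/((n:ℝ)+1)) :=
              hV_mono.le_rightLim le_rfl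
            linarith
        _ ≤ σ (Icc (s - 2/((n:ℝ)+1)) (t + 2/((n:ℝ)+1))) :=
            measure_mono (fun x hx => ⟨hx.1.le, le_trans hx.2 (by linarith)⟩)
    exact le_antisymm dir1 dir2
  -- almost-everywhere lower bound for the derivative
  have hDae : ∀ᵐ x : ℝ, x ∈ I →
      Tendsto (fun s => dist (γ s) (γ x) / |s - x|) (𝓝[I \ {x}] x) (𝓝 (D x)) :=
    (ae_restrict_iff' hI.measurableSet).1 hD
  have hfilter : ∀ x, a < x → x < b → 𝓝[>] x ≤ 𝓝[I \ {x}] x := by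
    intro x hax hxb
    have h1 : 𝓝[Ioi x] x = 𝓝[Ioi x ∩ Iio b] x :=
      (nhdsWithin_inter_of_mem' (mem_nhdsWithin_of_mem_nhds (Iio_mem_nhds hxb))).symm
    rw [show (𝓝[>] x) = 𝓝[Ioi x] x from rfl, h1]
    apply nhdsWithin_mono
    rintro z ⟨hz1, hz2⟩
    exact ⟨hIccI ⟨le_of_lt (lt_trans hax hz1), le_of_lt hz2⟩,
      by simp only [mem_singleton_iff]; exact ne_of_gt hz1⟩
  have hae1 : ∀ᵐ x : ℝ, x ∈ Ioo a b → ENNReal.ofReal (D x) ≤ σ.rnDeriv volume x := by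
    filter_upwards [hDae, hV_mono.ae_hasDerivAt, Measure.rnDeriv_lt_top σ volume]
      with x hDx hVx hrn hx
    rw [← hσdef] at hVx
    have hDright : Tendsto (fun s => dist (γ s) (γ x) / |s - x|) (𝓝[>] x) (𝓝 (D x)) :=
      (hDx (hIccI ⟨hx.1.le, hx.2.le⟩)).mono_left (hfilter x hx.1 hx.2)
    have hslope : Tendsto (fun s => (V s - V x)/(s - x)) (𝓝[>] x)
        (𝓝 ((σ.rnDeriv volume x).toReal)) := by
      have h2 := (hasDerivAt_iff_tendsto_slope.1 hVx).mono_left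
        (nhdsWithin_mono x (show Ioi x ⊆ {x}ᶜ from fun z hz => by simpa using ne_of_gt hz))
      exact h2.congr (fun s => by rw [slope_def_field])
    have hcmp : D x ≤ (σ.rnDeriv volume x).toReal := by
      refine le_of_tendsto_of_tendsto hDright hslope ?_
      filter_upwards [Ioo_mem_nhdsGT_of_mem (⟨le_rfl, hx.2⟩ : x ∈ Ico x b)] with s hs
      have hsx : x < s := hs.1
      have hmem_s : s ∈ Icc a b := ⟨le_trans hx.1.le hsx.le, hs.2.le⟩
      have hmem_x : x ∈ Icc a b := ⟨hx.1.le, hx.2.le⟩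
      rw [abs_of_pos (by linarith : (0:ℝ) < s - x)]
      exact (div_le_div_iff_of_pos_right (by linarith : (0:ℝ) < s - x)).2
        (hdistV x s hmem_x hmem_s hsx.le)
    calc ENNReal.ofReal (D x) ≤ ENNReal.ofReal ((σ.rnDeriv volume x).toReal) :=
        ENNReal.ofReal_le_ofReal hcmp
      _ = σ.rnDeriv volume x := ENNReal.ofReal_toReal hrn.ne
  -- derivative comparison for the auxiliary monotone functions
  have haeDer : ∀ᵐ x : ℝ, x ∈ Ioo a b → ∀ n,
      |((σP n).rnDeriv volume x).toReal - ((σQ n).rnDeriv volume x).toReal| ≤ 2 * D x := by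
    have H : ∀ n : ℕ, ∀ᵐ x : ℝ, x ∈ Ioo a b →
        |((σP n).rnDeriv volume x).toReal - ((σQ n).rnDeriv volume x).toReal| ≤ 2 * D x := by
      intro n
      filter_upwards [hDae, (hP_mono n).ae_hasDerivAt, (hQ_mono n).ae_hasDerivAt]
        with x hDx hPx hQx hx
      have eP : (hP_mono n).stieltjesFunction.measure = σP n := (congrFun hσPdef n).symm
      have eQ : (hQ_mono n).stieltjesFunction.measure = σQ n := (congrFun hσQdef n).symm
      rw [eP] at hPx
      rw [eQ] at hQx
      have hDright : Tendsto (fun s => dist (γ s) (γ x) / |s - x|) (𝓝[>] x) (𝓝 (D x)) :=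
        (hDx (hIccI ⟨hx.1.le, hx.2.le⟩)).mono_left (hfilter x hx.1 hx.2)
      have hsub : HasDerivAt (fun z => P n z - Q n z)
          (((σP n).rnDeriv volume x).toReal - ((σQ n).rnDeriv volume x).toReal) x :=
        hPx.sub hQx
      have hslope := (hasDerivAt_iff_tendsto_slope.1 hsub).mono_left
        (nhdsWithin_mono x (show Ioi x ⊆ {x}ᶜ from fun z hz => by simpa using ne_of_gt hz))
      have habs := hslope.abs
      refine le_of_tendsto_of_tendsto habs (hDright.const_mul 2) ?_
      filter_upwards [Ioo_mem_nhdsGT_of_mem (⟨le_rfl, hx.2⟩ : x ∈ Ico x b)] with s hs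
      have hsx : x < s := hs.1
      have hss : s ∈ Icc a b := ⟨le_trans hx.1.le hsx.le, hs.2.le⟩
      have hxx : x ∈ Icc a b := ⟨hx.1.le, hx.2.le⟩
      have hnum : (fun z => P n z - Q n z) s - (fun z => P n z - Q n z) x
          = 2 * (ψ n s - ψ n x) := by
        simp only [hPdef, hQdef]
        ring
      rw [slope_def_field, hnum, abs_div, abs_mul, abs_two, mul_div_assoc]
      refine mul_le_mul_of_nonneg_left ?_ (by norm_num : (0:ℝ) ≤ 2)
      have hden : (0:ℝ) < |s - x| := abs_pos.2 (by linarith)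
      refine (div_le_div_iff_of_pos_right hden).2 ?_
      have h5 : |ψ n s - ψ n x| ≤ dist (γ (c s)) (γ (c x)) := abs_dist_sub_le _ _ _
      rwa [hc_eq s hss, hc_eq x hxx] at h5
    filter_upwards [MeasureTheory.ae_all_iff.2 H] with x hx₁ hx₂ n
    exact hx₁ n hx₂
  have hrnP : ∀ᵐ x : ℝ, x ∈ Ioo a b → ∀ n,
      (σP n).rnDeriv volume x ≤ (σQ n).rnDeriv volume x + 2 * ENNReal.ofReal (D x) ∧
      (σQ n).rnDeriv volume x ≤ (σP n).rnDeriv volume x + 2 * ENNReal.ofReal (D x) := by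
    have HP : ∀ n : ℕ, ∀ᵐ x : ℝ, ((σP n).rnDeriv volume x) < ⊤ := fun n => by
      haveI := hσPfin n
      exact Measure.rnDeriv_lt_top _ _
    have HQ : ∀ n : ℕ, ∀ᵐ x : ℝ, ((σQ n).rnDeriv volume x) < ⊤ := fun n => by
      haveI := hσQfin n
      exact Measure.rnDeriv_lt_top _ _
    filter_upwards [haeDer, MeasureTheory.ae_all_iff.2 HP, MeasureTheory.ae_all_iff.2 HQ]
      with x h1 h2 h3 hx n
    have hd := h1 hx n
    have hD0 : 0 ≤ D x := by
      have := abs_nonneg (((σP n).rnDeriv volume x).toReal - ((σQ n).rnDeriv volume x).toReal)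
      linarith
    have habs := abs_le.1 hd
    constructor
    · calc (σP n).rnDeriv volume x
          = ENNReal.ofReal (((σP n).rnDeriv volume x).toReal) :=
            (ENNReal.ofReal_toReal (h2 n).ne).symm
        _ ≤ ENNReal.ofReal (((σQ n).rnDeriv volume x).toReal + 2 * D x) :=
            ENNReal.ofReal_le_ofReal (by linarith [habs.2])
        _ ≤ ENNReal.ofReal (((σQ n).rnDeriv volume x).toReal) + ENNReal.ofReal (2 * D x) :=
            ENNReal.ofReal_add_le
        _ = (σQ n).rnDeriv volume x + 2 * ENNReal.ofReal (D x) := by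
            rw [ENNReal.ofReal_toReal (h3 n).ne,
              ENNReal.ofReal_mul (by norm_num : (0:ℝ) ≤ 2)]
            norm_num
    · calc (σQ n).rnDeriv volume x
          = ENNReal.ofReal (((σQ n).rnDeriv volume x).toReal) :=
            (ENNReal.ofReal_toReal (h3 n).ne).symm
        _ ≤ ENNReal.ofReal (((σP n).rnDeriv volume x).toReal + 2 * D x) :=
            ENNReal.ofReal_le_ofReal (by linarith [habs.1])
        _ ≤ ENNReal.ofReal (((σP n).rnDeriv volume x).toReal) + ENNReal.ofReal (2 * D x) :=
            ENNReal.ofReal_add_le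
        _ = (σP n).rnDeriv volume x + 2 * ENNReal.ofReal (D x) := by
            rw [ENNReal.ofReal_toReal (h2 n).ne,
              ENNReal.ofReal_mul (by norm_num : (0:ℝ) ≤ 2)]
            norm_num
  -- sum of the Stieltjes measures
  have hPQmeas : ∀ n, σP n + σQ n = (2:ℝ≥0) • σ := by
    intro n
    haveI := hσPfin n
    haveI := hσQfin n
    refine Measure.ext_of_Ioc _ _ ?_
    intro s t hst
    have e1 : σP n (Ioc s t) = ENNReal.ofReal (rightLim (P n) t - rightLim (P n) s) := by
      simp only [hσPdef]
      rw [StieltjesFunction.measure_Ioc, (hP_mono n).stieltjesFunction_eq,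
        (hP_mono n).stieltjesFunction_eq]
    have e2 : σQ n (Ioc s t) = ENNReal.ofReal (rightLim (Q n) t - rightLim (Q n) s) := by
      simp only [hσQdef]
      rw [StieltjesFunction.measure_Ioc, (hQ_mono n).stieltjesFunction_eq,
        (hQ_mono n).stieltjesFunction_eq]
    have hPQV : ∀ z, rightLim (P n) z + rightLim (Q n) z = 2 * rightLim V z := by
      intro z
      have h1 : (fun u => P n u + Q n u) = (fun u => 2 * V u) := by
        funext u
        simp only [hPdef, hQdef]
        ring
      have h2 := rightLim_add_monotone (hP_mono n) (hQ_mono n) z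
      rw [show (fun u => P n u + Q n u) = (fun z => P n z + Q n z) from rfl] at h1
      rw [h1, rightLim_two_mul hV_mono z] at h2
      linarith [h2]
    have hmono_rP : rightLim (P n) s ≤ rightLim (P n) t := by
      rcases eq_or_lt_of_le hst.le with h | h
      · rw [h]
      · exact le_trans ((hP_mono n).rightLim_le (show s < (s+t)/2 by linarith))
          ((hP_mono n).le_rightLim (show (s+t)/2 ≤ t by linarith))
    have hmono_rQ : rightLim (Q n) s ≤ rightLim (Q n) t := by
      rcases eq_or_lt_of_le hst.le with h | h
      · rw [h]
      · exact le_trans ((hQ_mono n).rightLim_le (show s < (s+t)/2 by linarith))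
          ((hQ_mono n).le_rightLim (show (s+t)/2 ≤ t by linarith))
    rw [Measure.add_apply, e1, e2, Measure.smul_apply, hσIoc,
      ← ENNReal.ofReal_add (sub_nonneg.2 hmono_rP) (sub_nonneg.2 hmono_rQ)]
    have e3 : rightLim (P n) t - rightLim (P n) s + (rightLim (Q n) t - rightLim (Q n) s)
        = 2 * (rightLim V t - rightLim V s) := by
      have ht' := hPQV t
      have hs' := hPQV s
      linarith
    rw [e3, ENNReal.ofReal_mul (by norm_num : (0:ℝ) ≤ 2), ENNReal.smul_def]
    norm_num
  set σs : Measure ℝ := σ.singularPart volume with hσs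
  haveI : IsFiniteMeasure σs := by
    rw [hσs]; infer_instance
  have hsing_sum : ∀ n, (σP n).singularPart volume + (σQ n).singularPart volume
      = (2:ℝ≥0) • σs := by
    intro n
    haveI := hσPfin n
    haveI := hσQfin n
    rw [← Measure.singularPart_add, hPQmeas n, hσs, Measure.singularPart_smul]
  have hwIoo_fin : w (Ioo a b) ≠ ⊤ := by
    rw [hw, withDensity_apply _ measurableSet_Ioo]
    have hle : (∫⁻ x in Ioo a b, ENNReal.ofReal (D x) ∂volume)
        ≤ ∫⁻ x in Ioo a b, σ.rnDeriv volume x ∂volume := by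
      apply lintegral_mono_ae
      filter_upwards [(ae_restrict_iff' measurableSet_Ioo).2 hae1] with x h1
      exact h1
    exact (lt_of_le_of_lt hle (lt_of_le_of_lt (Measure.setLIntegral_rnDeriv_le _)
      (measure_lt_top σ _))).ne
  -- the crucial FTC-type estimate between continuity points
  have hPhat_eq : ∀ (f : ℝ → ℝ) (hf : Monotone f),
      (∀ u v, u ≤ v → |f v - f u| ≤ 2*(V v - V u)) → ∀ x, ContinuousAt V x →
      rightLim f x = f x := by
    intro f hf hlip x hcont
    have hVtend : Tendsto V (𝓝[>] x) (𝓝 (V x)) := hcont.tendsto.mono_left nhdsWithin_le_nhds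
    have htend : Tendsto f (𝓝[>] x) (𝓝 (f x)) := by
      apply tendsto_of_tendsto_of_tendsto_of_le_of_le'
        (g := fun z => f x - 2*(V z - V x)) (h := fun z => f x + 2*(V z - V x))
      · have h1 : Tendsto (fun z => f x - 2*(V z - V x)) (𝓝[>] x)
            (𝓝 (f x - 2*(V x - V x))) :=
          tendsto_const_nhds.sub ((hVtend.sub_const (V x)).const_mul 2)
        simpa using h1
      · have h1 : Tendsto (fun z => f x + 2*(V z - V x)) (𝓝[>] x)
            (𝓝 (f x + 2*(V x - V x))) :=
          tendsto_const_nhds.add ((hVtend.sub_const (V x)).const_mul 2)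
        simpa using h1
      · filter_upwards [self_mem_nhdsWithin] with z hz
        have h2 := abs_le.1 (hlip x z (le_of_lt hz))
        linarith [h2.1]
      · filter_upwards [self_mem_nhdsWithin] with z hz
        have h2 := abs_le.1 (hlip x z (le_of_lt hz))
        linarith [h2.2]
    exact rightLim_eq_of_tendsto (α := ℝ) htend
  have hmid : ∀ n u' v', a < u' → u' ≤ v' → v' < b → ContinuousAt V u' → ContinuousAt V v' →
      |ψ n v' - ψ n u'| ≤ (w (Ioc u' v')).toReal + (σs (Ioc u' v')).toReal := by
    intro n u' v' hau hupv hvb hcu hcv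
    haveI := hσPfin n
    haveI := hσQfin n
    have hlipP : ∀ u v, u ≤ v → |P n v - P n u| ≤ 2*(V v - V u) := by
      intro u v huv
      have h1 := abs_le.1 (hψ_lip n u v huv)
      have h2 : V u ≤ V v := hV_mono huv
      rw [abs_le]
      constructor
      · simp only [hPdef]
        linarith [h1.1]
      · simp only [hPdef]
        linarith [h1.2]
    have hlipQ : ∀ u v, u ≤ v → |Q n v - Q n u| ≤ 2*(V v - V u) := by
      intro u v huv
      have h1 := abs_le.1 (hψ_lip n u v huv)
      have h2 : V u ≤ V v := hV_mono huv
      rw [abs_le]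
      constructor
      · simp only [hQdef]
        linarith [h1.2]
      · simp only [hQdef]
        linarith [h1.1]
    have hPu : rightLim (P n) u' = P n u' := hPhat_eq (P n) (hP_mono n) hlipP u' hcu
    have hPv : rightLim (P n) v' = P n v' := hPhat_eq (P n) (hP_mono n) hlipP v' hcv
    have hQu : rightLim (Q n) u' = Q n u' := hPhat_eq (Q n) (hQ_mono n) hlipQ u' hcu
    have hQv : rightLim (Q n) v' = Q n v' := hPhat_eq (Q n) (hQ_mono n) hlipQ v' hcv
    have hPval : σP n (Ioc u' v') = ENNReal.ofReal (P n v' - P n u') := by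
      have e1 : σP n (Ioc u' v')
          = ENNReal.ofReal (rightLim (P n) v' - rightLim (P n) u') := by
        simp only [hσPdef]
        rw [StieltjesFunction.measure_Ioc, (hP_mono n).stieltjesFunction_eq,
          (hP_mono n).stieltjesFunction_eq]
      rw [e1, hPu, hPv]
    have hQval : σQ n (Ioc u' v') = ENNReal.ofReal (Q n v' - Q n u') := by
      have e1 : σQ n (Ioc u' v')
          = ENNReal.ofReal (rightLim (Q n) v' - rightLim (Q n) u') := by
        simp only [hσQdef]
        rw [StieltjesFunction.measure_Ioc, (hQ_mono n).stieltjesFunction_eq,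
          (hQ_mono n).stieltjesFunction_eq]
      rw [e1, hQu, hQv]
    have hEsub : Ioc u' v' ⊆ Ioo a b := fun x hx =>
      ⟨lt_trans hau hx.1, lt_of_le_of_lt hx.2 hvb⟩
    have hdecP : σP n (Ioc u' v') = (σP n).singularPart volume (Ioc u' v')
        + ∫⁻ x in Ioc u' v', (σP n).rnDeriv volume x ∂volume := by
      conv_lhs => rw [(σP n).haveLebesgueDecomposition_add volume]
      rw [Measure.add_apply, withDensity_apply _ measurableSet_Ioc]
    have hdecQ : σQ n (Ioc u' v') = (σQ n).singularPart volume (Ioc u' v')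
        + ∫⁻ x in Ioc u' v', (σQ n).rnDeriv volume x ∂volume := by
      conv_lhs => rw [(σQ n).haveLebesgueDecomposition_add volume]
      rw [Measure.add_apply, withDensity_apply _ measurableSet_Ioc]
    have hintP : (∫⁻ x in Ioc u' v', (σP n).rnDeriv volume x ∂volume)
        ≤ (∫⁻ x in Ioc u' v', (σQ n).rnDeriv volume x ∂volume) + 2 * w (Ioc u' v') := by
      have hae' : ∀ᵐ x ∂(volume.restrict (Ioc u' v')),
          (σP n).rnDeriv volume x ≤ (σQ n).rnDeriv volume x + 2 * ENNReal.ofReal (D x) := by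
        filter_upwards [ae_restrict_of_ae hrnP, ae_restrict_mem measurableSet_Ioc]
          with x h1 h2
        exact (h1 (hEsub h2) n).1
      calc (∫⁻ x in Ioc u' v', (σP n).rnDeriv volume x ∂volume)
          ≤ ∫⁻ x in Ioc u' v',
              ((σQ n).rnDeriv volume x + 2 * ENNReal.ofReal (D x)) ∂volume :=
            lintegral_mono_ae hae'
        _ = (∫⁻ x in Ioc u' v', (σQ n).rnDeriv volume x ∂volume)
            + ∫⁻ x in Ioc u' v', 2 * ENNReal.ofReal (D x) ∂volume :=
            lintegral_add_right _ (hDmeas.ennreal_ofReal.const_mul 2)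
        _ = (∫⁻ x in Ioc u' v', (σQ n).rnDeriv volume x ∂volume) + 2 * w (Ioc u' v') := by
            rw [lintegral_const_mul 2 hDmeas.ennreal_ofReal, hw,
              withDensity_apply _ measurableSet_Ioc]
    have hintQ : (∫⁻ x in Ioc u' v', (σQ n).rnDeriv volume x ∂volume)
        ≤ (∫⁻ x in Ioc u' v', (σP n).rnDeriv volume x ∂volume) + 2 * w (Ioc u' v') := by
      have hae' : ∀ᵐ x ∂(volume.restrict (Ioc u' v')),
          (σQ n).rnDeriv volume x ≤ (σP n).rnDeriv volume x + 2 * ENNReal.ofReal (D x) := by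
        filter_upwards [ae_restrict_of_ae hrnP, ae_restrict_mem measurableSet_Ioc]
          with x h1 h2
        exact (h1 (hEsub h2) n).2
      calc (∫⁻ x in Ioc u' v', (σQ n).rnDeriv volume x ∂volume)
          ≤ ∫⁻ x in Ioc u' v',
              ((σP n).rnDeriv volume x + 2 * ENNReal.ofReal (D x)) ∂volume :=
            lintegral_mono_ae hae'
        _ = (∫⁻ x in Ioc u' v', (σP n).rnDeriv volume x ∂volume)
            + ∫⁻ x in Ioc u' v', 2 * ENNReal.ofReal (D x) ∂volume :=
            lintegral_add_right _ (hDmeas.ennreal_ofReal.const_mul 2)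
        _ = (∫⁻ x in Ioc u' v', (σP n).rnDeriv volume x ∂volume) + 2 * w (Ioc u' v') := by
            rw [lintegral_const_mul 2 hDmeas.ennreal_ofReal, hw,
              withDensity_apply _ measurableSet_Ioc]
    have hsingsP : (σP n).singularPart volume (Ioc u' v') ≤ 2 * σs (Ioc u' v') := by
      have h2 : (σP n).singularPart volume (Ioc u' v')
          ≤ ((σP n).singularPart volume + (σQ n).singularPart volume) (Ioc u' v') := by
        rw [Measure.add_apply]
        exact le_self_add
      rw [hsing_sum n, Measure.smul_apply, ENNReal.smul_def] at h2
      simpa using h2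
    have hsingsQ : (σQ n).singularPart volume (Ioc u' v') ≤ 2 * σs (Ioc u' v') := by
      have h2 : (σQ n).singularPart volume (Ioc u' v')
          ≤ ((σP n).singularPart volume + (σQ n).singularPart volume) (Ioc u' v') := by
        rw [Measure.add_apply]
        exact le_add_self
      rw [hsing_sum n, Measure.smul_apply, ENNReal.smul_def] at h2
      simpa using h2
    have hPQE : σP n (Ioc u' v') ≤ σQ n (Ioc u' v')
        + (2 * w (Ioc u' v') + 2 * σs (Ioc u' v')) := by
      rw [hdecP, hdecQ]
      calc (σP n).singularPart volume (Ioc u' v')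
          + ∫⁻ x in Ioc u' v', (σP n).rnDeriv volume x ∂volume
          ≤ 2 * σs (Ioc u' v')
            + ((∫⁻ x in Ioc u' v', (σQ n).rnDeriv volume x ∂volume) + 2 * w (Ioc u' v')) :=
            add_le_add hsingsP hintP
        _ ≤ 2 * σs (Ioc u' v')
            + (((σQ n).singularPart volume (Ioc u' v')
              + ∫⁻ x in Ioc u' v', (σQ n).rnDeriv volume x ∂volume) + 2 * w (Ioc u' v')) := by
            gcongr
            exact le_add_self
        _ = ((σQ n).singularPart volume (Ioc u' v')
              + ∫⁻ x in Ioc u' v', (σQ n).rnDeriv volume x ∂volume)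
            + (2 * w (Ioc u' v') + 2 * σs (Ioc u' v')) := by ring
    have hQPE : σQ n (Ioc u' v') ≤ σP n (Ioc u' v')
        + (2 * w (Ioc u' v') + 2 * σs (Ioc u' v')) := by
      rw [hdecP, hdecQ]
      calc (σQ n).singularPart volume (Ioc u' v')
          + ∫⁻ x in Ioc u' v', (σQ n).rnDeriv volume x ∂volume
          ≤ 2 * σs (Ioc u' v')
            + ((∫⁻ x in Ioc u' v', (σP n).rnDeriv volume x ∂volume) + 2 * w (Ioc u' v')) :=
            add_le_add hsingsQ hintQ
        _ ≤ 2 * σs (Ioc u' v')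
            + (((σP n).singularPart volume (Ioc u' v')
              + ∫⁻ x in Ioc u' v', (σP n).rnDeriv volume x ∂volume) + 2 * w (Ioc u' v')) := by
            gcongr
            exact le_add_self
        _ = ((σP n).singularPart volume (Ioc u' v')
              + ∫⁻ x in Ioc u' v', (σP n).rnDeriv volume x ∂volume)
            + (2 * w (Ioc u' v') + 2 * σs (Ioc u' v')) := by ring
    have hwE : w (Ioc u' v') ≠ ⊤ := ne_top_of_le_ne_top hwIoo_fin (measure_mono hEsub)
    have hσsE : σs (Ioc u' v') ≠ ⊤ := measure_ne_top _ _
    have hQf : σQ n (Ioc u' v') ≠ ⊤ := measure_ne_top _ _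
    have hPf : σP n (Ioc u' v') ≠ ⊤ := measure_ne_top _ _
    have hPnn : 0 ≤ P n v' - P n u' := sub_nonneg.2 (hP_mono n hupv)
    have hQnn : 0 ≤ Q n v' - Q n u' := sub_nonneg.2 (hQ_mono n hupv)
    have hRHS : (σQ n (Ioc u' v') + (2 * w (Ioc u' v') + 2 * σs (Ioc u' v'))).toReal
        = (Q n v' - Q n u') + (2 * (w (Ioc u' v')).toReal + 2 * (σs (Ioc u' v')).toReal) := by
      rw [ENNReal.toReal_add hQf (by
          refine ENNReal.add_ne_top.2 ⟨?_, ?_⟩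
          · exact ENNReal.mul_ne_top (by norm_num) hwE
          · exact ENNReal.mul_ne_top (by norm_num) hσsE),
        ENNReal.toReal_add (ENNReal.mul_ne_top (by norm_num) hwE)
          (ENNReal.mul_ne_top (by norm_num) hσsE),
        ENNReal.toReal_mul, ENNReal.toReal_mul, hQval, ENNReal.toReal_ofReal hQnn]
      norm_num
    have hRHS' : (σP n (Ioc u' v') + (2 * w (Ioc u' v') + 2 * σs (Ioc u' v'))).toReal
        = (P n v' - P n u') + (2 * (w (Ioc u' v')).toReal + 2 * (σs (Ioc u' v')).toReal) := by
      rw [ENNReal.toReal_add hPf (by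
          refine ENNReal.add_ne_top.2 ⟨?_, ?_⟩
          · exact ENNReal.mul_ne_top (by norm_num) hwE
          · exact ENNReal.mul_ne_top (by norm_num) hσsE),
        ENNReal.toReal_add (ENNReal.mul_ne_top (by norm_num) hwE)
          (ENNReal.mul_ne_top (by norm_num) hσsE),
        ENNReal.toReal_mul, ENNReal.toReal_mul, hPval, ENNReal.toReal_ofReal hPnn]
      norm_num
    have htR1 : P n v' - P n u'
        ≤ (Q n v' - Q n u') + (2 * (w (Ioc u' v')).toReal + 2 * (σs (Ioc u' v')).toReal) := by
      have hne : σQ n (Ioc u' v') + (2 * w (Ioc u' v') + 2 * σs (Ioc u' v')) ≠ ⊤ :=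
        ENNReal.add_ne_top.2 ⟨hQf, ENNReal.add_ne_top.2
          ⟨ENNReal.mul_ne_top (by norm_num) hwE, ENNReal.mul_ne_top (by norm_num) hσsE⟩⟩
      have h6 := ENNReal.toReal_mono hne hPQE
      rw [hPval, ENNReal.toReal_ofReal hPnn, hRHS] at h6
      exact h6
    have htR2 : Q n v' - Q n u'
        ≤ (P n v' - P n u') + (2 * (w (Ioc u' v')).toReal + 2 * (σs (Ioc u' v')).toReal) := by
      have hne : σP n (Ioc u' v') + (2 * w (Ioc u' v') + 2 * σs (Ioc u' v')) ≠ ⊤ :=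
        ENNReal.add_ne_top.2 ⟨hPf, ENNReal.add_ne_top.2
          ⟨ENNReal.mul_ne_top (by norm_num) hwE, ENNReal.mul_ne_top (by norm_num) hσsE⟩⟩
      have h6 := ENNReal.toReal_mono hne hQPE
      rw [hQval, ENNReal.toReal_ofReal hQnn, hRHS'] at h6
      exact h6
    have hψval : 2*(ψ n v' - ψ n u') = (P n v' - P n u') - (Q n v' - Q n u') := by
      simp only [hPdef, hQdef]
      ring
    rw [abs_le]
    constructor
    · linarith [htR2, hψval]
    · linarith [htR1, hψval]
  -- the per-segment bound
  set M : Measure ℝ := w + σs with hM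
  have hMfin : ∀ E : Set ℝ, E ⊆ Ioo a b → M E ≠ ⊤ := by
    intro E hE
    rw [hM, Measure.add_apply]
    exact ENNReal.add_ne_top.2
      ⟨ne_top_of_le_ne_top hwIoo_fin (measure_mono hE), measure_ne_top σs E⟩
  have hatomM : ∀ z : ℝ,
      ENNReal.ofReal (V z - leftLim V z) + ENNReal.ofReal (rightLim V z - V z) ≤ M {z} := by
    intro z
    have h1 : leftLim V z ≤ V z := hV_mono.leftLim_le le_rfl
    have h2 : V z ≤ rightLim V z := hV_mono.le_rightLim le_rfl
    rw [← ENNReal.ofReal_add (by linarith) (by linarith),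
      show V z - leftLim V z + (rightLim V z - V z) = rightLim V z - leftLim V z by ring,
      ← hσsingleton]
    have hσeq : σ {z} = σs {z} := by
      conv_lhs => rw [σ.haveLebesgueDecomposition_add volume]
      rw [Measure.add_apply, withDensity_apply _ (measurableSet_singleton z),
        setLIntegral_measure_zero _ _ (by simp : volume ({z}:Set ℝ) = 0), add_zero, hσs]
    rw [hσeq, hM, Measure.add_apply]
    exact le_add_self
  have hedist : ∀ u v, a < u → u < v → v < b →
      edist (γ v) (γ u) ≤ ENNReal.ofReal (rightLim V u - V u) + M (Ioo u v)
        + ENNReal.ofReal (V v - leftLim V v) := by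
    intro u v hau huv hvb
    have hMuv : M (Ioo u v) ≠ ⊤ :=
      hMfin _ (fun x hx => ⟨lt_trans hau hx.1, lt_trans hx.2 hvb⟩)
    have hmain : ∀ e : ℝ, 0 < e →
        dist (γ v) (γ u) ≤ (rightLim V u - V u) + ((M (Ioo u v)).toReal
          + (V v - leftLim V v)) + 4*e := by
      intro e he
      have h1 : ∀ᶠ z in 𝓝[>] u, V z < rightLim V u + e :=
        (hV_mono.tendsto_rightLim u).eventually_lt_const (by linarith)
      have h2 : ∀ᶠ z in 𝓝[<] v, leftLim V v - e < V z :=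
        (hV_mono.tendsto_leftLim v).eventually_const_lt (by linarith)
      obtain ⟨u₁, hu₁, hsub₁⟩ := mem_nhdsGT_iff_exists_Ioo_subset.1 h1
      obtain ⟨v₁, hv₁, hsub₂⟩ := mem_nhdsLT_iff_exists_Ioo_subset.1 h2
      obtain ⟨u', hu'mem, hu'C⟩ := exists_mem_Ioo_not_mem
        hV_mono.countable_not_continuousAt (show u < min u₁ v from lt_min hu₁ huv)
      have hu'v : u' < v := lt_of_lt_of_le hu'mem.2 (min_le_right _ _)
      obtain ⟨v', hv'mem, hv'C⟩ := exists_mem_Ioo_not_mem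
        hV_mono.countable_not_continuousAt (show max v₁ u' < v from max_lt hv₁ hu'v)
      have hu'mem2 : u' ∈ Icc a b :=
        ⟨le_of_lt (lt_trans hau hu'mem.1), le_of_lt (lt_trans hu'v hvb)⟩
      obtain ⟨n, hn⟩ := hy_dense u' hu'mem2 e he
      have huv' : u' ≤ v' := le_trans (le_max_right v₁ u') hv'mem.1.le
      have hv'mem2 : v' ∈ Icc a b :=
        ⟨le_trans hu'mem2.1 huv', le_of_lt (lt_trans hv'mem.2 hvb)⟩
      have humem : u ∈ Icc a b := ⟨hau.le, le_of_lt (lt_trans huv hvb)⟩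
      have hvmem : v ∈ Icc a b := ⟨le_of_lt (lt_trans hau huv), hvb.le⟩
      have hd1 : dist (γ v) (γ v') ≤ V v - V v' := hdistV v' v hv'mem2 hvmem hv'mem.2.le
      have hd3 : dist (γ u') (γ u) ≤ V u' - V u := hdistV u u' humem hu'mem2 hu'mem.1.le
      have hψu' : ψ n u' = dist (γ u') (y n) := by
        simp only [hψdef]
        rw [hc_eq u' hu'mem2]
      have hψv' : ψ n v' = dist (γ v') (y n) := by
        simp only [hψdef]
        rw [hc_eq v' hv'mem2]
      have hd2 : dist (γ v') (γ u') ≤ (ψ n v' - ψ n u') + 2*e := by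
        have ht := dist_triangle (γ v') (y n) (γ u')
        have h4 : dist (y n) (γ u') < e := by
          rw [dist_comm]
          exact hn
        have h5 : ψ n u' < e := by
          rw [hψu']
          exact hn
        rw [← hψv'] at ht
        linarith
      have hcu' : ContinuousAt V u' := not_not.1 (by simpa using hu'C)
      have hcv' : ContinuousAt V v' := not_not.1 (by simpa using hv'C)
      have hmidb := hmid n u' v' (lt_trans hau hu'mem.1) huv'
        (lt_trans hv'mem.2 hvb) hcu' hcv'
      have hsubE : Ioc u' v' ⊆ Ioo u v := fun x hx =>
        ⟨lt_trans hu'mem.1 hx.1, lt_of_le_of_lt hx.2 hv'mem.2⟩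
      have hfinw2 : w (Ioo u v) ≠ ⊤ := ne_top_of_le_ne_top hwIoo_fin
        (measure_mono (fun x hx => ⟨lt_trans hau hx.1, lt_trans hx.2 hvb⟩))
      have hmono_m : (w (Ioc u' v')).toReal + (σs (Ioc u' v')).toReal
          ≤ (M (Ioo u v)).toReal := by
        have e1 : (M (Ioo u v)).toReal = (w (Ioo u v)).toReal + (σs (Ioo u v)).toReal := by
          rw [hM, Measure.add_apply, ENNReal.toReal_add hfinw2 (measure_ne_top _ _)]
        rw [e1]
        exact add_le_add (ENNReal.toReal_mono hfinw2 (measure_mono hsubE))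
          (ENNReal.toReal_mono (measure_ne_top _ _) (measure_mono hsubE))
      have hj1 : V u' - V u ≤ (rightLim V u - V u) + e := by
        have h7 : V u' < rightLim V u + e :=
          hsub₁ ⟨hu'mem.1, lt_of_lt_of_le hu'mem.2 (min_le_left _ _)⟩
        linarith
      have hj2 : V v - V v' ≤ (V v - leftLim V v) + e := by
        have h7 : leftLim V v - e < V v' :=
          hsub₂ ⟨lt_of_le_of_lt (le_max_left _ _) hv'mem.1, hv'mem.2⟩
        linarith
      have habs : ψ n v' - ψ n u' ≤ |ψ n v' - ψ n u'| := le_abs_self _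
      calc dist (γ v) (γ u)
          ≤ dist (γ v) (γ v') + dist (γ v') (γ u') + dist (γ u') (γ u) :=
            dist_triangle4 _ _ _ _
        _ ≤ (V v - V v') + ((ψ n v' - ψ n u') + 2*e) + (V u' - V u) :=
            add_le_add (add_le_add hd1 hd2) hd3
        _ ≤ (rightLim V u - V u) + ((M (Ioo u v)).toReal + (V v - leftLim V v)) + 4*e := by
            have hh := le_trans (le_trans habs hmidb)
              (by linarith [hmono_m] :
                (w (Ioc u' v')).toReal + (σs (Ioc u' v')).toReal ≤ (M (Ioo u v)).toReal)
            linarith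
    rw [edist_dist]
    apply ENNReal.le_of_forall_pos_le_add
    intro ε hε hlt
    have hε' : (0:ℝ) < (ε:ℝ)/4 := by
      have : (0:ℝ) < (ε:ℝ) := by exact_mod_cast hε
      linarith
    have h0 := hmain ((ε:ℝ)/4) hε'
    calc ENNReal.ofReal (dist (γ v) (γ u))
        ≤ ENNReal.ofReal ((rightLim V u - V u)
          + ((M (Ioo u v)).toReal + (V v - leftLim V v)) + 4*((ε:ℝ)/4)) :=
          ENNReal.ofReal_le_ofReal h0
      _ ≤ (ENNReal.ofReal (rightLim V u - V u)
          + ENNReal.ofReal ((M (Ioo u v)).toReal + (V v - leftLim V v)))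
          + ENNReal.ofReal (4*((ε:ℝ)/4)) :=
          le_trans ENNReal.ofReal_add_le (add_le_add_left ENNReal.ofReal_add_le _)
      _ ≤ (ENNReal.ofReal (rightLim V u - V u)
          + (M (Ioo u v) + ENNReal.ofReal (V v - leftLim V v))) + ↑ε := by
          apply add_le_add
          · apply add_le_add le_rfl
            calc ENNReal.ofReal ((M (Ioo u v)).toReal + (V v - leftLim V v))
                ≤ ENNReal.ofReal ((M (Ioo u v)).toReal)
                  + ENNReal.ofReal (V v - leftLim V v) := ENNReal.ofReal_add_le
              _ = M (Ioo u v) + ENNReal.ofReal (V v - leftLim V v) := by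
                  rw [ENNReal.ofReal_toReal hMuv]
          · rw [show (4:ℝ)*((ε:ℝ)/4) = (ε:ℝ) by ring]
            exact le_of_eq ENNReal.ofReal_coe_nnreal
      _ = (ENNReal.ofReal (rightLim V u - V u) + M (Ioo u v)
          + ENNReal.ofReal (V v - leftLim V v)) + ↑ε := by
          ring
  -- partition assembly
  have hK4 : ∀ s t, a < s → s ≤ t → t < b → eVariationOn γ (Icc s t) ≤ M (Icc s t) := by
    intro s t hs hst htb
    rw [eVariationOn]
    refine iSup_le ?_
    rintro ⟨m, p, hp, hpmem⟩
    have hmem' : ∀ i, a < p i ∧ p i < b := fun i =>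
      ⟨lt_of_lt_of_le hs (hpmem i).1, lt_of_le_of_lt (hpmem i).2 htb⟩
    have hjumpR : ∀ z : ℝ, ENNReal.ofReal (rightLim V z - V z) ≤ M {z} :=
      fun z => le_trans le_add_self (hatomM z)
    have hjumpL : ∀ z : ℝ, ENNReal.ofReal (V z - leftLim V z) ≤ M {z} :=
      fun z => le_trans le_self_add (hatomM z)
    have hstep : ∀ k : ℕ,
        (∑ i ∈ Finset.range k, edist (γ (p (i+1))) (γ (p i))) ≤
        (if p 0 < p k then ENNReal.ofReal (rightLim V (p 0) - V (p 0)) + M (Ioo (p 0) (p k))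
          + ENNReal.ofReal (V (p k) - leftLim V (p k)) else 0) := by
      intro k
      induction k with
      | zero =>
        rw [Finset.sum_range_zero, if_neg (lt_irrefl _)]
      | succ k ih =>
        rw [Finset.sum_range_succ]
        rcases eq_or_lt_of_le (hp (Nat.le_succ k)) with heq | hlt
        · rw [← heq, edist_self, add_zero]
          exact ih
        · have hed := hedist (p k) (p (k+1)) (hmem' k).1 hlt (hmem' (k+1)).2
          rcases eq_or_lt_of_le (hp (Nat.zero_le k)) with h0k | h0k
          · have hzero : (∑ i ∈ Finset.range k, edist (γ (p (i+1))) (γ (p i))) ≤ 0 := by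
              rw [if_neg (by rw [← h0k]; exact lt_irrefl _)] at ih
              exact ih
            rw [if_pos (h0k ▸ hlt)]
            calc (∑ i ∈ Finset.range k, edist (γ (p (i+1))) (γ (p i)))
                + edist (γ (p (k+1))) (γ (p k))
                ≤ 0 + (ENNReal.ofReal (rightLim V (p k) - V (p k)) + M (Ioo (p k) (p (k+1)))
                  + ENNReal.ofReal (V (p (k+1)) - leftLim V (p (k+1)))) := add_le_add hzero hed
              _ = ENNReal.ofReal (rightLim V (p k) - V (p k)) + M (Ioo (p k) (p (k+1)))
                  + ENNReal.ofReal (V (p (k+1)) - leftLim V (p (k+1))) := zero_add _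
              _ = ENNReal.ofReal (rightLim V (p 0) - V (p 0)) + M (Ioo (p 0) (p (k+1)))
                  + ENNReal.ofReal (V (p (k+1)) - leftLim V (p (k+1))) := by rw [h0k]
          · rw [if_pos h0k] at ih
            rw [if_pos (lt_trans h0k hlt)]
            have hMun : M (Ioo (p 0) (p k)) + M {p k} + M (Ioo (p k) (p (k+1)))
                = M (Ioo (p 0) (p (k+1))) := by
              have hd1 : Disjoint (Ioo (p 0) (p k)) ({p k} : Set ℝ) := by
                rw [disjoint_singleton_right]
                exact fun h => absurd h.2 (lt_irrefl _)
              have hd2 : Disjoint (Ioo (p 0) (p k) ∪ {p k}) (Ioo (p k) (p (k+1))) := by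
                rw [Set.disjoint_left]
                rintro z (hz | hz) hz2
                · exact absurd (lt_trans hz.2 hz2.1) (lt_irrefl z)
                · rw [mem_singleton_iff] at hz
                  rw [hz] at hz2
                  exact absurd hz2.1 (lt_irrefl _)
              have hset : Ioo (p 0) (p (k+1))
                  = (Ioo (p 0) (p k) ∪ {p k}) ∪ Ioo (p k) (p (k+1)) := by
                ext z
                simp only [mem_Ioo, mem_union, mem_singleton_iff]
                constructor
                · rintro ⟨hz1, hz2⟩
                  rcases lt_trichotomy z (p k) with h | h | h
                  · exact Or.inl (Or.inl ⟨hz1, h⟩)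
                  · exact Or.inl (Or.inr h)
                  · exact Or.inr ⟨h, hz2⟩
                · rintro ((⟨h1, h2⟩ | rfl) | ⟨h1, h2⟩)
                  · exact ⟨h1, lt_trans h2 hlt⟩
                  · exact ⟨h0k, hlt⟩
                  · exact ⟨lt_trans h0k h1, h2⟩
              rw [hset, measure_union hd2 measurableSet_Ioo,
                measure_union hd1 (measurableSet_singleton _)]
            calc (∑ i ∈ Finset.range k, edist (γ (p (i+1))) (γ (p i)))
                + edist (γ (p (k+1))) (γ (p k))
                ≤ (ENNReal.ofReal (rightLim V (p 0) - V (p 0)) + M (Ioo (p 0) (p k))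
                  + ENNReal.ofReal (V (p k) - leftLim V (p k)))
                  + (ENNReal.ofReal (rightLim V (p k) - V (p k)) + M (Ioo (p k) (p (k+1)))
                  + ENNReal.ofReal (V (p (k+1)) - leftLim V (p (k+1)))) := add_le_add ih hed
              _ = ENNReal.ofReal (rightLim V (p 0) - V (p 0))
                  + (M (Ioo (p 0) (p k))
                    + (ENNReal.ofReal (V (p k) - leftLim V (p k))
                      + ENNReal.ofReal (rightLim V (p k) - V (p k)))
                    + M (Ioo (p k) (p (k+1))))
                  + ENNReal.ofReal (V (p (k+1)) - leftLim V (p (k+1))) := by ring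
              _ ≤ ENNReal.ofReal (rightLim V (p 0) - V (p 0))
                  + (M (Ioo (p 0) (p k)) + M {p k} + M (Ioo (p k) (p (k+1))))
                  + ENNReal.ofReal (V (p (k+1)) - leftLim V (p (k+1))) := by
                  gcongr
                  exact hatomM (p k)
              _ = ENNReal.ofReal (rightLim V (p 0) - V (p 0)) + M (Ioo (p 0) (p (k+1)))
                  + ENNReal.ofReal (V (p (k+1)) - leftLim V (p (k+1))) := by rw [hMun]
    have hfin := hstep m
    by_cases hcond : p 0 < p m
    · rw [if_pos hcond] at hfin
      refine le_trans hfin ?_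
      have hd1 : Disjoint ({p 0} : Set ℝ) (Ioo (p 0) (p m)) := by
        rw [disjoint_singleton_left]
        exact fun h => absurd h.1 (lt_irrefl _)
      have hd2 : Disjoint (({p 0} : Set ℝ) ∪ Ioo (p 0) (p m)) ({p m} : Set ℝ) := by
        rw [disjoint_singleton_right]
        rintro (h | h)
        · rw [mem_singleton_iff] at h
          exact absurd (h ▸ hcond) (lt_irrefl _)
        · exact absurd h.2 (lt_irrefl _)
      have hsub : ({p 0} : Set ℝ) ∪ Ioo (p 0) (p m) ∪ {p m} ⊆ Icc s t := by
        rintro z ((hz | hz) | hz)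
        · rw [mem_singleton_iff] at hz
          rw [hz]
          exact ⟨(hpmem 0).1, (hpmem 0).2⟩
        · exact ⟨le_trans (hpmem 0).1 hz.1.le, le_trans hz.2.le (hpmem m).2⟩
        · rw [mem_singleton_iff] at hz
          rw [hz]
          exact ⟨(hpmem m).1, (hpmem m).2⟩
      calc ENNReal.ofReal (rightLim V (p 0) - V (p 0)) + M (Ioo (p 0) (p m))
          + ENNReal.ofReal (V (p m) - leftLim V (p m))
          ≤ M {p 0} + M (Ioo (p 0) (p m)) + M {p m} :=
            add_le_add (add_le_add (hjumpR _) le_rfl) (hjumpL _)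
        _ = M ({p 0} ∪ Ioo (p 0) (p m) ∪ {p m}) := by
            rw [measure_union hd2 (measurableSet_singleton _),
              measure_union hd1 measurableSet_Ioo]
        _ ≤ M (Icc s t) := measure_mono hsub
    · rw [if_neg hcond] at hfin
      exact le_trans hfin zero_le
  -- transfer to the Stieltjes measure
  have hintineq : ∀ s t, a < s → s ≤ t → t < b → σ (Icc s t) ≤ M (Icc s t) := by
    intro s t hs hst htb
    obtain ⟨N, hN⟩ := exists_nat_one_div_lt
      (show (0:ℝ) < min (s - a) (b - t) from lt_min (by linarith) (by linarith))
    have hsmall : ∀ n : ℕ, N ≤ n → 1/((n:ℝ)+1) < min (s-a) (b-t) := by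
      intro n hn
      refine lt_of_le_of_lt ?_ hN
      apply one_div_le_one_div_of_le (by positivity)
      exact_mod_cast by omega
    have hsub' : ∀ n : ℕ, N ≤ n →
        Icc (s - 1/((n:ℝ)+1)) (t + 1/((n:ℝ)+1)) ⊆ Ioo a b := by
      intro n hn x hx
      have h1 := hsmall n hn
      have h2 := min_le_left (s-a) (b-t)
      have h3 := min_le_right (s-a) (b-t)
      exact ⟨by linarith [hx.1], by linarith [hx.2]⟩
    have h1 := tendsto_measure_Ioc_shrink σ hst ⟨0, measure_ne_top σ _⟩
    have h2 := tendsto_measure_Icc_shrink M hst one_pos ⟨N, hMfin _ (hsub' N le_rfl)⟩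
    refine le_of_tendsto_of_tendsto h1 h2 ?_
    filter_upwards [eventually_ge_atTop N] with n hn
    have h3 : (0:ℝ) < 1/((n:ℝ)+1) := by positivity
    have h4 := hsmall n hn
    have h5 := min_le_left (s-a) (b-t)
    have h6 := min_le_right (s-a) (b-t)
    have hL : s - 1/((n:ℝ)+1) ∈ Icc a b := ⟨by linarith, by linarith⟩
    have hR : t + 1/((n:ℝ)+1) ∈ Icc a b := ⟨by linarith, by linarith⟩
    have hle' : s - 1/((n:ℝ)+1) ≤ t + 1/((n:ℝ)+1) := by linarith
    calc σ (Ioc (s - 1/((n:ℝ)+1)) t)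
        = ENNReal.ofReal (rightLim V t - rightLim V (s - 1/((n:ℝ)+1))) := hσIoc _ _
      _ ≤ ENNReal.ofReal (V (t + 1/((n:ℝ)+1)) - V (s - 1/((n:ℝ)+1))) := by
          apply ENNReal.ofReal_le_ofReal
          have hup : rightLim V t ≤ V (t + 1/((n:ℝ)+1)) := hV_mono.rightLim_le (by linarith)
          have hlow : V (s - 1/((n:ℝ)+1)) ≤ rightLim V (s - 1/((n:ℝ)+1)) :=
            hV_mono.le_rightLim le_rfl
          linarith
      _ = eVariationOn γ (Icc (s - 1/((n:ℝ)+1)) (t + 1/((n:ℝ)+1))) :=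
          (hV_evar _ _ hL hR hle').symm
      _ ≤ M (Icc (s - 1/((n:ℝ)+1)) (t + 1/((n:ℝ)+1))) :=
          hK4 _ _ (by linarith) hle' (by linarith)
  -- identification of the absolutely continuous part
  have hwIcc : ∀ s t, a < s → s ≤ t → t < b →
      w (Icc s t) = ∫⁻ x in Icc s t, σ.rnDeriv volume x ∂volume := by
    intro s t hs hst htb
    have hsub : Icc s t ⊆ Ioo a b := fun x hx =>
      ⟨lt_of_lt_of_le hs hx.1, lt_of_le_of_lt hx.2 htb⟩
    refine le_antisymm ?_ ?_
    · rw [hw, withDensity_apply _ measurableSet_Icc]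
      apply lintegral_mono_ae
      filter_upwards [ae_restrict_of_ae hae1, ae_restrict_mem measurableSet_Icc]
        with x h1 h2
      exact h1 (hsub h2)
    · have hdecσ : σ (Icc s t) = σs (Icc s t) + ∫⁻ x in Icc s t, σ.rnDeriv volume x ∂volume := by
        conv_lhs => rw [σ.haveLebesgueDecomposition_add volume]
        rw [Measure.add_apply, withDensity_apply _ measurableSet_Icc, ← hσs]
      have h3 := hintineq s t hs hst htb
      rw [hdecσ, hM, Measure.add_apply] at h3
      have hfinσs : σs (Icc s t) ≠ ⊤ := measure_ne_top _ _
      rw [add_comm (σs (Icc s t)) _] at h3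
      exact (ENNReal.add_le_add_iff_right hfinσs).1 h3
  -- measure-level identities on `Ioo a b`
  have hresσ : σ.restrict (Ioo a b) = ν.restrict (Ioo a b) :=
    restrict_eq_of_Icc hab (measure_ne_top σ _) hσν
  have hνfin : ν (Ioo a b) ≠ ⊤ :=
    (lt_of_le_of_lt (measure_mono Ioo_subset_Icc_self) (nu_Icc_lt_top hI hγ hν ha hb hab.le)).ne
  have hsing3 : νsing.restrict (Ioo a b) = σs.restrict (Ioo a b) := by
    rw [restrict_singular_eq hdecomp hac hsing measurableSet_Ioo hνfin, ← hresσ,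
      singularPart_restrict σ measurableSet_Ioo, hσs]
  have hres_ac : νac.restrict (Ioo a b)
      = (volume.withDensity (σ.rnDeriv volume)).restrict (Ioo a b) := by
    have hsum1 : νac.restrict (Ioo a b) + νsing.restrict (Ioo a b)
        = (volume.withDensity (σ.rnDeriv volume)).restrict (Ioo a b)
          + σs.restrict (Ioo a b) := by
      rw [← Measure.restrict_add, ← hdecomp, ← hresσ]
      conv_lhs => rw [σ.haveLebesgueDecomposition_add volume]
      rw [Measure.restrict_add, add_comm, hσs]
    refine Measure.ext fun E hE => ?_
    have h5 : νac.restrict (Ioo a b) E + νsing.restrict (Ioo a b) E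
        = (volume.withDensity (σ.rnDeriv volume)).restrict (Ioo a b) E
          + σs.restrict (Ioo a b) E := by
      rw [← Measure.add_apply, hsum1, Measure.add_apply]
    rw [hsing3] at h5
    have hfin5 : σs.restrict (Ioo a b) E ≠ ⊤ := by
      rw [Measure.restrict_apply hE]
      exact measure_ne_top σs _
    rw [add_comm (νac.restrict (Ioo a b) E) _,
      add_comm ((volume.withDensity (σ.rnDeriv volume)).restrict (Ioo a b) E) _] at h5
    exact (ENNReal.add_right_inj hfin5).1 h5
  have hres_w : (volume.withDensity (σ.rnDeriv volume)).restrict (Ioo a b)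
      = w.restrict (Ioo a b) := by
    apply restrict_eq_of_Icc hab
    · exact ne_top_of_le_ne_top (measure_ne_top σ _)
        (Measure.le_iff'.1 (Measure.withDensity_rnDeriv_le σ volume) (Ioo a b))
    · intro s t hs hst htb
      rw [withDensity_apply _ measurableSet_Icc]
      exact (hwIcc s t hs hst htb).symm
  have hnull : ∀ (μ' : Measure ℝ), μ' ≪ volume → μ' (Icc a b) = μ' (Ioo a b) := by
    intro μ' hμ'
    have h0 : μ' ({a} ∪ {b} : Set ℝ) = 0 := hμ' (measure_union_null (by simp) (by simp))
    refine le_antisymm ?_ (measure_mono Ioo_subset_Icc_self)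
    have hsub : Icc a b ⊆ Ioo a b ∪ ({a} ∪ {b}) := by
      intro x hx
      rcases eq_or_lt_of_le hx.1 with h1 | h1
      · exact Or.inr (Or.inl (by simp [← h1]))
      rcases eq_or_lt_of_le hx.2 with h2 | h2
      · exact Or.inr (Or.inr (by simp [h2]))
      · exact Or.inl ⟨h1, h2⟩
    calc μ' (Icc a b) ≤ μ' (Ioo a b ∪ ({a} ∪ {b})) := measure_mono hsub
      _ ≤ μ' (Ioo a b) + μ' ({a} ∪ {b}) := measure_union_le _ _
      _ = μ' (Ioo a b) := by rw [h0, add_zero]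
  calc νac (Icc a b) = νac (Ioo a b) := hnull νac hac
    _ = νac.restrict (Ioo a b) (Ioo a b) := (Measure.restrict_apply_self _ _).symm
    _ = w.restrict (Ioo a b) (Ioo a b) := by rw [hres_ac, hres_w]
    _ = w (Ioo a b) := Measure.restrict_apply_self _ _
    _ = w (Icc a b) := (hnull w (withDensity_absolutelyContinuous _ _)).symm

end Core
section Claim1

lemma nuac_eq_w {X : Type*} [MetricSpace X] {I : Set ℝ} (hI : I.OrdConnected) {γ : ℝ → X}
    (hγ : ∀ a ∈ I, ∀ b ∈ I, a ≤ b → eVariationOn γ (Set.Icc a b) < ⊤)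
    {ν νac νsing : Measure ℝ} (hν : IsSpeedMeasure γ I ν)
    (hdecomp : ν = νac + νsing) (hac : νac ≪ volume) (hsing : νsing ⟂ₘ volume)
    {D : ℝ → ℝ} (hDmeas : Measurable D)
    (hD : ∀ᵐ t ∂(volume.restrict I),
      Tendsto (fun s => dist (γ s) (γ t) / |s - t|) (𝓝[I \ {t}] t) (𝓝 (D t)))
    {J : Set ℝ} (hJI : J ⊆ I) (hJ : J.OrdConnected) :
    νac J = volume.withDensity (fun t => ENNReal.ofReal (D t)) J := by
  classical
  set w : Measure ℝ := volume.withDensity (fun t => ENNReal.ofReal (D t)) with hw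
  have hIcc_eq : ∀ p q : ℝ, p ∈ I → q ∈ I → νac (Icc p q) = w (Icc p q) := by
    intro p q hp hq
    rcases lt_trichotomy p q with h | h | h
    · exact core hI hγ hν hdecomp hac hsing hDmeas hD hp hq h
    · rw [h, Icc_self]
      rw [hac (by simp), (withDensity_absolutelyContinuous volume _) (by simp : volume ({q} : Set ℝ) = 0)]
    · rw [Icc_eq_empty (not_le.2 h)]
      simp
  set s : {pq : ℚ × ℚ // Icc ((pq.1:ℝ)) ((pq.2:ℝ)) ⊆ J} → Set ℝ :=
    fun i => Icc ((i.1.1:ℝ)) ((i.1.2:ℝ)) with hs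
  have hdir : Directed (· ⊆ ·) s := by
    intro i j
    by_cases hi : (i.1.1:ℝ) ≤ (i.1.2:ℝ)
    · by_cases hj' : (j.1.1:ℝ) ≤ (j.1.2:ℝ)
      · have hpJ : ((i.1.1:ℝ)) ∈ J := i.2 ⟨le_rfl, hi⟩
        have hqJ : ((i.1.2:ℝ)) ∈ J := i.2 ⟨hi, le_rfl⟩
        have hpJ' : ((j.1.1:ℝ)) ∈ J := j.2 ⟨le_rfl, hj'⟩
        have hqJ' : ((j.1.2:ℝ)) ∈ J := j.2 ⟨hj', le_rfl⟩
        have hminJ : ((min i.1.1 j.1.1 : ℚ):ℝ) ∈ J := by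
          rcases min_choice i.1.1 j.1.1 with h | h <;> rw [h]
          exacts [hpJ, hpJ']
        have hmaxJ : ((max i.1.2 j.1.2 : ℚ):ℝ) ∈ J := by
          rcases max_choice i.1.2 j.1.2 with h | h <;> rw [h]
          exacts [hqJ, hqJ']
        have hsubJ : Icc ((min i.1.1 j.1.1 : ℚ):ℝ) ((max i.1.2 j.1.2 : ℚ):ℝ) ⊆ J :=
          fun z hz => hJ.out hminJ hmaxJ hz
        refine ⟨⟨(min i.1.1 j.1.1, max i.1.2 j.1.2), hsubJ⟩, ?_, ?_⟩
        · apply Icc_subset_Icc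
          · push_cast
            exact min_le_left _ _
          · push_cast
            exact le_max_left _ _
        · apply Icc_subset_Icc
          · push_cast
            exact min_le_right _ _
          · push_cast
            exact le_max_right _ _
      · refine ⟨i, subset_rfl, ?_⟩
        rw [hs]
        simp only
        rw [Icc_eq_empty (not_le.2 (lt_of_not_ge hj'))]
        exact empty_subset _
    · refine ⟨j, ?_, subset_rfl⟩
      rw [hs]
      simp only
      rw [Icc_eq_empty (not_le.2 (lt_of_not_ge hi))]
      exact empty_subset _
  have hKJ : (⋃ i, s i) ⊆ J := iUnion_subset fun i => i.2
  have hJK : J \ (⋃ i, s i) ⊆ {x | IsLeast J x} ∪ {x | IsGreatest J x} := by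
    intro x hx
    by_contra hcon
    rw [mem_union] at hcon
    push_neg at hcon
    have hL : ¬ IsLeast J x := hcon.1
    have hG : ¬ IsGreatest J x := hcon.2
    rw [IsLeast] at hL
    push_neg at hL
    obtain ⟨zl, hzl, hzl2⟩ : ∃ z ∈ J, z < x := by
      have h5 := hL hx.1
      simp only [lowerBounds, mem_setOf_eq] at h5
      push_neg at h5
      obtain ⟨z, hz1, hz2⟩ := h5
      exact ⟨z, hz1, hz2⟩
    rw [IsGreatest] at hG
    push_neg at hG
    obtain ⟨zr, hzr, hzr2⟩ : ∃ z ∈ J, x < z := by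
      have h5 := hG hx.1
      simp only [upperBounds, mem_setOf_eq] at h5
      push_neg at h5
      obtain ⟨z, hz1, hz2⟩ := h5
      exact ⟨z, hz1, hz2⟩
    obtain ⟨p, hp1, hp2⟩ := exists_rat_btwn hzl2
    obtain ⟨q, hq1, hq2⟩ := exists_rat_btwn hzr2
    have hsubJ : Icc ((p:ℝ)) ((q:ℝ)) ⊆ J := fun z hz =>
      hJ.out hzl hzr ⟨le_trans hp1.le hz.1, le_trans hz.2 hq2.le⟩
    exact hx.2 (mem_iUnion.2 ⟨⟨(p,q), hsubJ⟩, ⟨hp2.le, hq1.le⟩⟩)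
  have hnullJK : volume (J \ (⋃ i, s i)) = 0 := by
    refine measure_mono_null hJK (measure_union_null ?_ ?_)
    · refine Set.Countable.measure_zero ?_ _
      refine Set.Subsingleton.countable ?_
      intro x hx y hy
      exact le_antisymm (hx.2 hy.1) (hy.2 hx.1)
    · refine Set.Countable.measure_zero ?_ _
      refine Set.Subsingleton.countable ?_
      intro x hx y hy
      exact le_antisymm (hy.2 hx.1) (hx.2 hy.1)
  have hKeq : νac (⋃ i, s i) = w (⋃ i, s i) := by
    rw [hdir.measure_iUnion, hdir.measure_iUnion]
    refine iSup_congr fun i => ?_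
    by_cases hi : (i.1.1:ℝ) ≤ (i.1.2:ℝ)
    · exact hIcc_eq _ _ (hJI (i.2 ⟨le_rfl, hi⟩)) (hJI (i.2 ⟨hi, le_rfl⟩))
    · rw [hs]
      simp only
      rw [Icc_eq_empty hi]
      simp
  have hgen : ∀ μ' : Measure ℝ, μ' ≪ volume → μ' J = μ' (⋃ i, s i) := by
    intro μ' hμ'
    refine le_antisymm ?_ (measure_mono hKJ)
    calc μ' J ≤ μ' ((⋃ i, s i) ∪ (J \ (⋃ i, s i))) := measure_mono (by
          intro z hz
          by_cases h : z ∈ ⋃ i, s i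
          exacts [Or.inl h, Or.inr ⟨hz, h⟩])
      _ ≤ μ' (⋃ i, s i) + μ' (J \ (⋃ i, s i)) := measure_union_le _ _
      _ = μ' (⋃ i, s i) := by rw [hμ' hnullJK, add_zero]
  rw [hgen νac hac, hgen w (withDensity_absolutelyContinuous volume _), hKeq]

end Claim1
/-- With `ν = ν_ac + ν_sing` the Lebesgue decomposition of the speed
measure and `D = |γ̇|` the metric derivative (defined a.e. on `I`), for every
subinterval `J ⊆ I` one has `Var(γ;J) ≤ ∫_J |γ̇| dλ + ν_sing(J)`, with equality if every
point of `J` not in the relative interior of `J` is a continuity point of `γ`;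
in particular equality holds for all subintervals when `γ` is continuous. -/
theorem variation_integral_formula {X : Type*} [MetricSpace X]
    (I : Set ℝ) (hI : I.OrdConnected) (γ : ℝ → X)
    (hγ : ∀ a ∈ I, ∀ b ∈ I, a ≤ b → eVariationOn γ (Set.Icc a b) < ⊤)
    (ν νac νsing : Measure ℝ) (hν : IsSpeedMeasure γ I ν)
    (hdecomp : ν = νac + νsing)
    (hac : νac ≪ volume) (hsing : νsing ⟂ₘ volume)
    (D : ℝ → ℝ) (hDmeas : Measurable D)
    (hD : ∀ᵐ t ∂(volume.restrict I),
      Tendsto (fun s => dist (γ s) (γ t) / |s - t|) (𝓝[I \ {t}] t) (𝓝 (D t))) :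
    (∀ J : Set ℝ, J ⊆ I → J.OrdConnected →
      eVariationOn γ J ≤ (∫⁻ t in J, ENNReal.ofReal (D t)) + νsing J ∧
      ((∀ t ∈ J, (¬ ∃ U : Set ℝ, IsOpen U ∧ t ∈ U ∧ U ∩ I ⊆ J) →
          ContinuousWithinAt γ I t) →
        eVariationOn γ J = (∫⁻ t in J, ENNReal.ofReal (D t)) + νsing J)) ∧
    (ContinuousOn γ I → ∀ J : Set ℝ, J ⊆ I → J.OrdConnected →
      eVariationOn γ J = (∫⁻ t in J, ENNReal.ofReal (D t)) + νsing J) := by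
  have main : ∀ J : Set ℝ, J ⊆ I → J.OrdConnected →
      eVariationOn γ J ≤ (∫⁻ t in J, ENNReal.ofReal (D t)) + νsing J ∧
      ((∀ t ∈ J, (¬ ∃ U : Set ℝ, IsOpen U ∧ t ∈ U ∧ U ∩ I ⊆ J) →
          ContinuousWithinAt γ I t) →
        eVariationOn γ J = (∫⁻ t in J, ENNReal.ofReal (D t)) + νsing J) := by
    intro J hJI hJ
    have hJmeas : MeasurableSet J := hJ.measurableSet
    have hνJ : ν J = (∫⁻ t in J, ENNReal.ofReal (D t)) + νsing J := by
      have h1 : νac J = volume.withDensity (fun t => ENNReal.ofReal (D t)) J :=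
        nuac_eq_w hI hγ hν hdecomp hac hsing hDmeas hD hJI hJ
      conv_lhs => rw [hdecomp]
      rw [Measure.add_apply, h1, withDensity_apply _ hJmeas]
    constructor
    · rw [← hνJ]
      exact var_le_nu hI hγ hν hJI hJ
    · intro Hb
      rw [← hνJ]
      refine le_antisymm (var_le_nu hI hγ hν hJI hJ) ?_
      set J0 := {t | t ∈ J ∧ ∃ U : Set ℝ, IsOpen U ∧ t ∈ U ∧ U ∩ I ⊆ J} with hJ0
      have hJ0sub : J0 ⊆ J := fun t ht => ht.1
      have hJ0I : J0 ⊆ I := fun t ht => hJI ht.1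
      have hJ0ord : J0.OrdConnected := by
        constructor
        intro u hu v hv z hz
        refine ⟨hJ.out hu.1 hv.1 hz, ?_⟩
        obtain ⟨Uu, hUu1, hUu2, hUu3⟩ := hu.2
        obtain ⟨Uv, hUv1, hUv2, hUv3⟩ := hv.2
        refine ⟨Uu ∪ Uv ∪ Ioo u v, (hUu1.union hUv1).union isOpen_Ioo, ?_, ?_⟩
        · rcases eq_or_lt_of_le hz.1 with h | h
          · exact Or.inl (Or.inl (h ▸ hUu2))
          rcases eq_or_lt_of_le hz.2 with h2 | h2
          · exact Or.inl (Or.inr (by rw [h2]; exact hUv2))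
          · exact Or.inr ⟨h, h2⟩
        · rintro x ⟨(hx | hx) | hx, hxI⟩
          · exact hUu3 ⟨hx, hxI⟩
          · exact hUv3 ⟨hx, hxI⟩
          · exact hJ.out hu.1 hv.1 ⟨hx.1.le, hx.2.le⟩
      have hJ0open : ∃ U : Set ℝ, IsOpen U ∧ J0 = U ∩ I := by
        classical
        refine ⟨⋃ (t : ℝ) (h : t ∈ J0), Classical.choose h.2, ?_, ?_⟩
        · apply isOpen_iUnion
          intro t
          apply isOpen_iUnion
          intro h
          exact (Classical.choose_spec h.2).1
        · ext x
          constructor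
          · intro hx
            exact ⟨mem_iUnion.2 ⟨x, mem_iUnion.2 ⟨hx, (Classical.choose_spec hx.2).2.1⟩⟩,
              hJ0I hx⟩
          · rintro ⟨hxU, hxI⟩
            rw [mem_iUnion] at hxU
            obtain ⟨t, ht⟩ := hxU
            rw [mem_iUnion] at ht
            obtain ⟨h, hxt⟩ := ht
            have hspec := Classical.choose_spec h.2
            have hxJ : x ∈ J := hspec.2.2 ⟨hxt, hxI⟩
            exact ⟨hxJ, Classical.choose h.2, hspec.1, hxt, hspec.2.2⟩
      have hνJ0 : ν J0 = eVariationOn γ J0 := hν.2 J0 hJ0I hJ0ord hJ0open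
      have hdiff : ν (J \ J0) = 0 := by
        have hsub2 : J \ J0 ⊆ {x | IsLeast J x} ∪ {x | IsGreatest J x} := by
          intro x hx
          by_contra hcon
          rw [mem_union] at hcon
          push_neg at hcon
          obtain ⟨zl, hzl, hzl2⟩ : ∃ z ∈ J, z < x := by
            by_contra h5
            push_neg at h5
            exact hcon.1 ⟨hx.1, fun z hz => h5 z hz⟩
          obtain ⟨zr, hzr, hzr2⟩ : ∃ z ∈ J, x < z := by
            by_contra h5
            push_neg at h5
            exact hcon.2 ⟨hx.1, fun z hz => h5 z hz⟩
          exact hx.2 ⟨hx.1, Ioo zl zr, isOpen_Ioo, ⟨hzl2, hzr2⟩,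
            fun z hz => hJ.out hzl hzr ⟨hz.1.1.le, hz.1.2.le⟩⟩
        have hpt : ∀ x ∈ J \ J0, ν {x} = 0 := by
          intro x hx
          exact nu_singleton hI hγ hν (hJI hx.1)
            (Hb x hx.1 (fun hcon => hx.2 ⟨hx.1, hcon⟩))
        have h1 : ν ((J \ J0) ∩ {x | IsLeast J x}) = 0 := by
          rcases Set.eq_empty_or_nonempty ((J \ J0) ∩ {x | IsLeast J x}) with h | h
          · rw [h]
            exact measure_empty
          · obtain ⟨x0, hx0⟩ := h
            have hss : (J \ J0) ∩ {x | IsLeast J x} ⊆ {x0} := by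
              intro z hz
              have := le_antisymm (hz.2.2 hx0.2.1) (hx0.2.2 hz.2.1)
              simp [this]
            exact measure_mono_null hss (hpt x0 hx0.1)
        have h2 : ν ((J \ J0) ∩ {x | IsGreatest J x}) = 0 := by
          rcases Set.eq_empty_or_nonempty ((J \ J0) ∩ {x | IsGreatest J x}) with h | h
          · rw [h]
            exact measure_empty
          · obtain ⟨x0, hx0⟩ := h
            have hss : (J \ J0) ∩ {x | IsGreatest J x} ⊆ {x0} := by
              intro z hz
              have := le_antisymm (hx0.2.2 hz.2.1) (hz.2.2 hx0.2.1)
              simp [this]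
            exact measure_mono_null hss (hpt x0 hx0.1)
        have hsub3 : J \ J0 ⊆ ((J \ J0) ∩ {x | IsLeast J x})
            ∪ ((J \ J0) ∩ {x | IsGreatest J x}) := by
          intro x hx
          rcases hsub2 hx with h | h
          exacts [Or.inl ⟨hx, h⟩, Or.inr ⟨hx, h⟩]
        exact measure_mono_null hsub3 (measure_union_null h1 h2)
      calc ν J ≤ ν (J0 ∪ (J \ J0)) := measure_mono (fun z hz => by
            by_cases h : z ∈ J0
            exacts [Or.inl h, Or.inr ⟨hz, h⟩])
        _ ≤ ν J0 + ν (J \ J0) := measure_union_le _ _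
        _ = eVariationOn γ J0 := by rw [hdiff, add_zero, hνJ0]
        _ ≤ eVariationOn γ J := eVariationOn.mono γ hJ0sub
  refine ⟨main, ?_⟩
  intro hcont J hJI hJ
  exact (main J hJI hJ).2 (fun t htJ _ => hcont t (hJI htJ))
end
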